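/- arXiv:1801.09875 — 4 statements merged into one kernel-verified Lean document; each statement's English description precedes it below -/
import Mathlib

section
/- Suppose ρ > 1/2. Then there exists a real-valued random variable L such that n^{−ρ}·U_n → L almost surely as n → ∞; in particular, n^{−ρ}(X_n − Y_n) converges almost surely to a finite limit. -/
open MeasureTheory Filter Finset

namespace Stmt0Aux

noncomputable def cpr (ρ s : ℝ) (n : ℕ) : ℝ := ∏ k ∈ Finset.range n, (1 + ρ / (s + k))

lemma cpr_succ' (ρ s : ℝ) (n : ℕ) : cpr ρ s (n + 1) = cpr ρ s n * (1 + ρ / (s + n)) := by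
  simp [cpr, Finset.prod_range_succ]

lemma one_le_cpr {ρ s : ℝ} (hρ : 0 ≤ ρ) (hs : 1 ≤ s) (n : ℕ) : 1 ≤ cpr ρ s n := by
  induction n with
  | zero => simp [cpr]
  | succ n ih =>
    rw [cpr_succ']
    have hs0 : (0:ℝ) < s := lt_of_lt_of_le one_pos hs
    have h1 : (0:ℝ) < s + n := by positivity
    have h2 : 0 ≤ ρ / (s + n) := div_nonneg hρ h1.le
    nlinarith

lemma cpr_pos {ρ s : ℝ} (hρ : 0 ≤ ρ) (hs : 1 ≤ s) (n : ℕ) : 0 < cpr ρ s n :=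
  lt_of_lt_of_le one_pos (one_le_cpr hρ hs n)

lemma cpr_succ (ρ s : ℝ) (n : ℕ) : cpr ρ s (n + 1) = cpr ρ s n * (1 + ρ / (s + n)) := by
  simp [cpr, Finset.prod_range_succ]

lemma abs_log_sub {x : ℝ} (hx : 0 ≤ x) : |Real.log (1 + x) - x| ≤ x ^ 2 := by
  have h1 : (0:ℝ) < 1 + x := by linarith
  have hub : Real.log (1 + x) ≤ x := by
    have := Real.log_le_sub_one_of_pos h1
    linarith
  have hlb : x - x ^ 2 ≤ Real.log (1 + x) := by
    have h2 : (0:ℝ) < (1 + x)⁻¹ := by positivity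
    have := Real.log_le_sub_one_of_pos h2
    rw [Real.log_inv] at this
    have h3 : x / (1 + x) ≤ Real.log (1 + x) := by
      have : -Real.log (1 + x) ≤ (1 + x)⁻¹ - 1 := this
      have h4 : (1 + x)⁻¹ - 1 = -(x / (1 + x)) := by field_simp; ring
      linarith [this.trans_eq h4]
    have h5 : x - x ^ 2 ≤ x / (1 + x) := by
      rw [le_div_iff₀ h1]
      nlinarith [sq_nonneg x]
    linarith
  rw [abs_le]; constructor <;> linarith


lemma cpr_tendsto {ρ s : ℝ} (hρ0 : 0 ≤ ρ) (hρ1 : ρ ≤ 1) (hs : 1 ≤ s) :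
    ∃ K : ℝ, 0 < K ∧
      Tendsto (fun n : ℕ => (n : ℝ) ^ (-ρ) * cpr ρ s n) atTop (nhds K) := by
  have hs0 : (0:ℝ) < s := lt_of_lt_of_le one_pos hs
  have ht : ∀ k : ℕ, (0:ℝ) < s + k := fun k => by positivity
  set d : ℕ → ℝ := fun k =>
    Real.log (1 + ρ / (s + k)) - ρ * (Real.log (s + k + 1) - Real.log (s + k)) with hd
  have hdbound : ∀ k : ℕ, |d k| ≤ 2 / ((k : ℝ) + 1) ^ 2 := by
    intro k
    have htk := ht k
    have hy : (0:ℝ) ≤ 1 / (s + k) := by positivity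
    have hx : (0:ℝ) ≤ ρ / (s + k) := div_nonneg hρ0 htk.le
    have hlog : Real.log (s + k + 1) - Real.log (s + k) = Real.log (1 + 1 / (s + k)) := by
      rw [← Real.log_div (by linarith) (ne_of_gt htk)]
      congr 1
      field_simp
    have e1 : |Real.log (1 + ρ / (s + k)) - ρ / (s + k)| ≤ (ρ / (s + k)) ^ 2 :=
      abs_log_sub hx
    have e2 : |Real.log (1 + 1 / (s + k)) - 1 / (s + k)| ≤ (1 / (s + k)) ^ 2 :=
      abs_log_sub hy
    have hrw : d k = (Real.log (1 + ρ / (s + k)) - ρ / (s + k))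
        - ρ * (Real.log (1 + 1 / (s + k)) - 1 / (s + k)) := by
      rw [hd]; simp only []; rw [hlog]; field_simp; ring
    have hk1 : ((k:ℝ) + 1) ≤ s + k := by linarith
    have hsq : (1 / (s + (k:ℝ))) ^ 2 ≤ 1 / ((k:ℝ) + 1) ^ 2 := by
      rw [div_pow, one_pow]
      exact one_div_le_one_div_of_le (by positivity) (by nlinarith)
    have hxsq : (ρ / (s + (k:ℝ))) ^ 2 ≤ 1 / ((k:ℝ) + 1) ^ 2 := by
      refine le_trans ?_ hsq
      have h0 : ρ / (s + (k:ℝ)) ≤ 1 / (s + (k:ℝ)) := by gcongr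
      exact pow_le_pow_left₀ hx h0 2
    have hysq : ρ * (1 / (s + (k:ℝ))) ^ 2 ≤ 1 / ((k:ℝ) + 1) ^ 2 := by
      nlinarith [sq_nonneg (1 / (s + (k:ℝ)))]
    rw [abs_le] at e1 e2 ⊢
    have m1 := mul_le_mul_of_nonneg_left e2.1 hρ0
    have m2 := mul_le_mul_of_nonneg_left e2.2 hρ0
    have m0 : ρ * -(1 / (s + (k:ℝ))) ^ 2 = -(ρ * (1 / (s + (k:ℝ))) ^ 2) := by ring
    rw [m0] at m1
    rw [show (2:ℝ) / ((k:ℝ)+1)^2 = 1/((k:ℝ)+1)^2 + 1/((k:ℝ)+1)^2 by ring]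
    constructor <;> rw [hrw] <;> linarith
  have hdsum : Summable d := by
    have hb0 : Summable (fun n : ℕ => ((n:ℝ)^(2:ℝ))⁻¹) :=
      Real.summable_nat_rpow_inv.mpr (by norm_num)
    have hb1 : Summable (fun n : ℕ => 2 * (((n:ℝ))^(2:ℝ))⁻¹) := hb0.mul_left 2
    have hb2 : Summable (fun k : ℕ => 2 * ((((k+1:ℕ)):ℝ)^(2:ℝ))⁻¹) :=
      (summable_nat_add_iff 1).mpr hb1
    refine Summable.of_norm_bounded hb2 ?_
    intro k
    have h1 := hdbound k
    have h2 : 2 * ((((k+1:ℕ)):ℝ)^(2:ℝ))⁻¹ = 2 / ((k:ℝ)+1)^2 := by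
      rw [show ((((k+1:ℕ)):ℝ)) = ((k:ℝ)+1) by push_cast; ring]
      rw [show (((k:ℝ)+1))^(2:ℝ) = ((k:ℝ)+1)^(2:ℕ) by
        rw [← Real.rpow_natCast ((k:ℝ)+1) 2]; norm_num]
      rw [div_eq_mul_inv]
    rw [h2]
    simpa using h1
  set f : ℕ → ℝ := fun n => Real.log (cpr ρ s n) - ρ * Real.log (s + n) with hfdef
  have hfac : ∀ n : ℕ, (0:ℝ) < 1 + ρ / (s + n) := by
    intro n
    have h1 : 0 ≤ ρ / (s + n) := div_nonneg hρ0 (ht n).le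
    linarith
  have hf : ∀ n, f n = f 0 + ∑ k ∈ Finset.range n, d k := by
    intro n
    induction n with
    | zero => simp
    | succ n ih =>
      rw [Finset.sum_range_succ, ← add_assoc, ← ih]
      have hlogm : Real.log (cpr ρ s (n+1))
          = Real.log (cpr ρ s n) + Real.log (1 + ρ/(s+n)) := by
        rw [cpr_succ, Real.log_mul (ne_of_gt (cpr_pos hρ0 hs n)) (ne_of_gt (hfac n))]
      simp only [hfdef, hd]
      rw [hlogm]
      push_cast
      ring
  have hft : Tendsto f atTop (nhds (f 0 + ∑' k, d k)) := by
    refine Tendsto.congr (fun n => (hf n).symm) (tendsto_const_nhds.add ?_)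
    exact hdsum.hasSum.tendsto_sum_nat
  refine ⟨Real.exp (f 0 + ∑' k, d k), Real.exp_pos _, ?_⟩
  have h1 : Tendsto (fun n : ℕ => Real.exp (f n)) atTop
      (nhds (Real.exp (f 0 + ∑' k, d k))) := (Real.continuous_exp.tendsto _).comp hft
  have h2 : Tendsto (fun n : ℕ => (s + (n:ℝ))/(n:ℝ)) atTop (nhds 1) := by
    have h0 : Tendsto (fun n : ℕ => s / (n:ℝ) + 1) atTop (nhds (0 + 1)) :=
      (tendsto_const_div_atTop_nhds_zero_nat s).add tendsto_const_nhds
    rw [zero_add] at h0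
    refine h0.congr' ?_
    filter_upwards [eventually_ge_atTop 1] with n hn
    have hn0 : (0:ℝ) < n := by exact_mod_cast hn
    field_simp
  have h2' : Tendsto (fun n : ℕ => ((s + (n:ℝ))/(n:ℝ)) ^ ρ) atTop (nhds 1) := by
    have hc : ContinuousAt (fun x : ℝ => x ^ ρ) 1 :=
      Real.continuousAt_rpow_const 1 ρ (Or.inl one_ne_zero)
    have := hc.tendsto.comp h2
    rw [Real.one_rpow] at this
    exact this
  have hmain := h1.mul h2'
  rw [mul_one] at hmain
  refine hmain.congr' ?_
  filter_upwards [eventually_ge_atTop 1] with n hn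
  have hn0 : (0:ℝ) < n := by exact_mod_cast hn
  have hsn : (0:ℝ) < s + n := ht n
  have hcpr : cpr ρ s n = Real.exp (f n) * (s + (n:ℝ)) ^ ρ := by
    rw [Real.rpow_def_of_pos hsn, ← Real.exp_add]
    have he : f n + Real.log (s + (n:ℝ)) * ρ = Real.log (cpr ρ s n) := by
      simp only [hfdef]; ring
    rw [he, Real.exp_log (cpr_pos hρ0 hs n)]
  rw [hcpr, Real.div_rpow hsn.le hn0.le, Real.rpow_neg hn0.le, div_eq_mul_inv]
  ring

lemma cpr_summable {ρ s : ℝ} (hρh : 1/2 < ρ) (hρ1 : ρ ≤ 1) (hs : 1 ≤ s) :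
    Summable (fun n : ℕ => ((cpr ρ s n)⁻¹) ^ 2) := by
  have hρ0 : (0:ℝ) ≤ ρ := by linarith
  obtain ⟨K, hK, hT⟩ := cpr_tendsto hρ0 hρ1 hs
  obtain ⟨N, hN⟩ := eventually_atTop.mp (hT.eventually (lt_mem_nhds (show K/2 < K by linarith)))
  set g : ℕ → ℝ := fun n => (2/K)^2 * (((n:ℝ))^(2*ρ))⁻¹ with hg
  have hsum_g : Summable g := (Real.summable_nat_rpow_inv.mpr (by linarith)).mul_left _
  rw [← summable_nat_add_iff (N+1)]
  refine Summable.of_nonneg_of_le (fun n => by positivity) ?_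
    ((summable_nat_add_iff (N+1)).mpr hsum_g)
  intro n
  have hmN : N ≤ n + (N+1) := by omega
  have h := hN _ hmN
  have hmpos : (0:ℝ) < ((n + (N+1) : ℕ):ℝ) := by positivity
  have hrp : (0:ℝ) < ((n + (N+1) : ℕ):ℝ)^ρ := Real.rpow_pos_of_pos hmpos ρ
  set m := n + (N+1) with hm
  have hid : ((m:ℕ):ℝ)^(-ρ) * cpr ρ s m * ((m:ℕ):ℝ)^ρ = cpr ρ s m := by
    rw [Real.rpow_neg hmpos.le]
    field_simp
  have hcpr_lb : (K/2) * ((m:ℕ):ℝ)^ρ < cpr ρ s m := by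
    have h3 := mul_lt_mul_of_pos_right h hrp
    rw [hid] at h3
    exact h3
  have hKpos2 : (0:ℝ) < (K/2) * ((m:ℕ):ℝ)^ρ := by positivity
  have hinv : (cpr ρ s m)⁻¹ ≤ ((K/2) * ((m:ℕ):ℝ)^ρ)⁻¹ :=
    inv_anti₀ hKpos2 hcpr_lb.le
  calc ((cpr ρ s m)⁻¹)^2 ≤ (((K/2)*((m:ℕ):ℝ)^ρ)⁻¹)^2 := by
        exact pow_le_pow_left₀ (inv_nonneg.mpr (cpr_pos hρ0 hs m).le) hinv 2
    _ = g m := by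
        rw [hg]
        show (K / 2 * ((m:ℕ):ℝ) ^ ρ)⁻¹ ^ 2 = (2 / K) ^ 2 * (((m:ℕ):ℝ) ^ (2 * ρ))⁻¹
        have hpow : (((m:ℕ):ℝ))^(2*ρ) = (((m:ℕ):ℝ)^ρ)^(2:ℕ) := by
          rw [mul_comm, Real.rpow_mul hmpos.le, ← Real.rpow_natCast (((m:ℕ):ℝ)^ρ) 2]
          norm_num
        rw [hpow]
        have hKne : K ≠ 0 := ne_of_gt hK
        field_simp

end Stmt0Aux


set_option maxHeartbeats 2000000
open Stmt0Aux

/-- For the auxiliary process `(Xₙ, Yₙ)` associated with Friedman's urn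
model, if `ρ = (α − β)/(α + β) > 1/2`, then `n^{−ρ}·Uₙ = n^{−ρ}(Xₙ − Yₙ)` converges
almost surely to a (finite, real-valued) random variable `L`. -/
theorem stmt_0
    {Ω : Type*} {m0 : MeasurableSpace Ω} (P : Measure Ω) [IsProbabilityMeasure P]
    (ℱ : Filtration ℕ m0)
    (α β : ℝ) (hα : 0 ≤ α) (hβ : 0 ≤ β) (hαβ : 0 < α + β)
    (ρ : ℝ) (hρ : ρ = (α - β) / (α + β))
    (x0 y0 : ℕ) (hx0y0 : 1 ≤ x0 + y0)
    (X Y : ℕ → Ω → ℕ)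
    (hXmeas : ∀ n, Measurable[ℱ n] (X n)) (hYmeas : ∀ n, Measurable[ℱ n] (Y n))
    (hX0 : ∀ ω, X 0 ω = x0) (hY0 : ∀ ω, Y 0 ω = y0)
    (hstep : ∀ n, ∀ᵐ ω ∂P,
      (X (n + 1) ω = X n ω + 1 ∧ Y (n + 1) ω = Y n ω) ∨
      (X (n + 1) ω = X n ω ∧ Y (n + 1) ω = Y n ω + 1))
    (hup : ∀ n,
      P[({ω' | X (n + 1) ω' = X n ω' + 1 ∧ Y (n + 1) ω' = Y n ω'} : Set Ω).indicator
          (fun _ => (1 : ℝ)) | ℱ n]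
        =ᵐ[P] fun ω => (α * (X n ω : ℝ) + β * (Y n ω : ℝ)) /
          ((α + β) * ((X n ω : ℝ) + (Y n ω : ℝ))))
    (hdown : ∀ n,
      P[({ω' | X (n + 1) ω' = X n ω' ∧ Y (n + 1) ω' = Y n ω' + 1} : Set Ω).indicator
          (fun _ => (1 : ℝ)) | ℱ n]
        =ᵐ[P] fun ω => (α * (Y n ω : ℝ) + β * (X n ω : ℝ)) /
          ((α + β) * ((X n ω : ℝ) + (Y n ω : ℝ))))
    (hρhalf : 1 / 2 < ρ) :
    ∃ L : Ω → ℝ, ∀ᵐ ω ∂P,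
      Tendsto (fun n : ℕ => (n : ℝ) ^ (-ρ) * ((X n ω : ℝ) - (Y n ω : ℝ)))
        atTop (nhds (L ω)) := by
  have hαβ' : (α + β) ≠ 0 := ne_of_gt hαβ
  have hρ1 : ρ ≤ 1 := by rw [hρ, div_le_one hαβ]; linarith
  have hρ0 : (0:ℝ) ≤ ρ := by linarith
  set sN : ℕ := x0 + y0 with hsN
  set s : ℝ := (sN : ℝ) with hsdef
  have hs : 1 ≤ s := by rw [hsdef]; exact_mod_cast hx0y0
  set U : ℕ → Ω → ℝ := fun n ω => (X n ω : ℝ) - (Y n ω : ℝ) with hU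
  set c : ℕ → ℝ := cpr ρ s with hcdef
  set M : ℕ → Ω → ℝ := fun n ω => (c n)⁻¹ * U n ω with hM
  have hc1 : ∀ n, 1 ≤ c n := one_le_cpr hρ0 hs
  have hcpos : ∀ n, 0 < c n := cpr_pos hρ0 hs
  have hcne : ∀ n, c n ≠ 0 := fun n => ne_of_gt (hcpos n)
  have hfac : ∀ n : ℕ, (0:ℝ) < 1 + ρ / (s + n) := by
    intro n
    have h0 : (0:ℝ) < s + n := by positivity
    have h1 : 0 ≤ ρ / (s + n) := div_nonneg hρ0 h0.le
    linarith
  -- a.e. facts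
  have hall : ∀ᵐ ω ∂P, ∀ n,
      (X (n + 1) ω = X n ω + 1 ∧ Y (n + 1) ω = Y n ω) ∨
      (X (n + 1) ω = X n ω ∧ Y (n + 1) ω = Y n ω + 1) := ae_all_iff.mpr hstep
  have hSsum : ∀ᵐ ω ∂P, ∀ n, X n ω + Y n ω = sN + n := by
    filter_upwards [hall] with ω hω
    intro n
    induction n with
    | zero => simp [hX0, hY0, hsN]
    | succ n ih => rcases hω n with ⟨h1, h2⟩ | ⟨h1, h2⟩ <;> omega
  have hUb : ∀ᵐ ω ∂P, ∀ n, |U n ω| ≤ s + n := by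
    filter_upwards [hSsum] with ω hω
    intro n
    have h1 : (X n ω : ℝ) + (Y n ω : ℝ) = s + n := by
      rw [hsdef]; exact_mod_cast congrArg (Nat.cast : ℕ → ℝ) (hω n)
    have hx : (0:ℝ) ≤ (X n ω : ℝ) := Nat.cast_nonneg _
    have hy : (0:ℝ) ≤ (Y n ω : ℝ) := Nat.cast_nonneg _
    rw [hU, abs_le]
    constructor <;> simp only <;> linarith
  -- integrability helper
  have hintb : ∀ (f : Ω → ℝ) (C : ℝ), AEStronglyMeasurable f P →
      (∀ᵐ ω ∂P, |f ω| ≤ C) → Integrable f P := by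
    intro f C hm hb
    exact memLp_one_iff_integrable.mp
      (MemLp.of_bound hm C (by simpa [Real.norm_eq_abs] using hb))
  -- measurability
  have hUsm : ∀ n, StronglyMeasurable[ℱ n] (U n) := by
    intro n
    exact ((measurable_from_nat.comp (hXmeas n)).sub
      (measurable_from_nat.comp (hYmeas n))).stronglyMeasurable
  have hMsm : ∀ n, StronglyMeasurable[ℱ n] (M n) := by
    intro n
    exact (hUsm n).const_mul _
  have hMm : ∀ n, AEStronglyMeasurable (M n) P :=
    fun n => ((hMsm n).mono (ℱ.le n)).aestronglyMeasurable
  have hUint : ∀ n, Integrable (U n) P := by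
    intro n
    refine hintb _ (s + n) ((hUsm n).mono (ℱ.le n)).aestronglyMeasurable ?_
    filter_upwards [hUb] with ω hω using hω n
  have hMb : ∀ n, ∀ᵐ ω ∂P, |M n ω| ≤ s + n := by
    intro n
    filter_upwards [hUb] with ω hω
    have h1 : (c n)⁻¹ ≤ 1 := by
      rw [inv_le_one_iff₀]; right; exact hc1 n
    have h2 : (0:ℝ) ≤ (c n)⁻¹ := (inv_nonneg).mpr (hcpos n).le
    have := hω n
    rw [hM]
    simp only [abs_mul, abs_of_nonneg h2]
    calc (c n)⁻¹ * |U n ω| ≤ 1 * (s + n) := by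
          apply mul_le_mul h1 (hω n) (abs_nonneg _) zero_le_one
      _ = s + n := one_mul _
  have hMint : ∀ n, Integrable (M n) P := by
    intro n
    exact hintb _ (s + n) (hMm n) (hMb n)
  -- the up/down sets
  set A : ℕ → Set Ω := fun n =>
    {ω' | X (n + 1) ω' = X n ω' + 1 ∧ Y (n + 1) ω' = Y n ω'} with hA
  set B : ℕ → Set Ω := fun n =>
    {ω' | X (n + 1) ω' = X n ω' ∧ Y (n + 1) ω' = Y n ω' + 1} with hB
  have hXm0 : ∀ n, Measurable (X n) := fun n => (hXmeas n).mono (ℱ.le n) le_rfl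
  have hYm0 : ∀ n, Measurable (Y n) := fun n => (hYmeas n).mono (ℱ.le n) le_rfl
  have hAmeas : ∀ n, MeasurableSet (A n) := by
    intro n
    exact (measurableSet_eq_fun (hXm0 (n+1))
        (measurable_from_nat.comp (hXm0 n))).inter
      (measurableSet_eq_fun (hYm0 (n+1)) (hYm0 n))
  have hBmeas : ∀ n, MeasurableSet (B n) := by
    intro n
    exact (measurableSet_eq_fun (hXm0 (n+1)) (hXm0 n)).inter
      (measurableSet_eq_fun (hYm0 (n+1))
        (measurable_from_nat.comp (hYm0 n)))
  have hiA : ∀ n, Integrable ((A n).indicator (fun _ => (1:ℝ))) P :=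
    fun n => (integrable_const 1).indicator (hAmeas n)
  have hiB : ∀ n, Integrable ((B n).indicator (fun _ => (1:ℝ))) P :=
    fun n => (integrable_const 1).indicator (hBmeas n)
  -- pointwise step decomposition
  have hU1 : ∀ n, U (n+1) =ᵐ[P]
      U n + ((A n).indicator (fun _ => (1:ℝ)) - (B n).indicator (fun _ => (1:ℝ))) := by
    intro n
    filter_upwards [hstep n] with ω hω
    rcases hω with ⟨h1, h2⟩ | ⟨h1, h2⟩
    · have hmA : ω ∈ A n := ⟨h1, h2⟩
      have hmB : ω ∉ B n := by
        intro hb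
        have := hb.1
        omega
      simp only [hU, Pi.add_apply, Pi.sub_apply,
        Set.indicator_of_mem hmA, Set.indicator_of_notMem hmB, h1, h2]
      push_cast
      ring
    · have hmB : ω ∈ B n := ⟨h1, h2⟩
      have hmA : ω ∉ A n := by
        intro hb
        have := hb.1
        omega
      simp only [hU, Pi.add_apply, Pi.sub_apply,
        Set.indicator_of_mem hmB, Set.indicator_of_notMem hmA, h1, h2]
      push_cast
      ring
  -- conditional expectation of U (n+1)
  have hcondU : ∀ n, P[U (n+1) | ℱ n] =ᵐ[P] fun ω => (1 + ρ/(s+n)) * U n ω := by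
    intro n
    have e0 : P[U (n+1) | ℱ n] =ᵐ[P]
        P[U n + ((A n).indicator (fun _ => (1:ℝ)) - (B n).indicator (fun _ => (1:ℝ))) | ℱ n] :=
      condExp_congr_ae (hU1 n)
    have e1 := condExp_add (μ := P) (m := ℱ n) (hUint n) ((hiA n).sub (hiB n))
    have e2 := condExp_sub (μ := P) (m := ℱ n) (hiA n) (hiB n)
    have e3 : P[U n | ℱ n] = U n :=
      condExp_of_stronglyMeasurable (ℱ.le n) (hUsm n) (hUint n)
    have e4 := hup n
    have e5 := hdown n
    refine ((((e0.trans e1).trans ?_)))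
    have e6 : P[U n|ℱ n] +
        P[((A n).indicator (fun _ => (1:ℝ)) - (B n).indicator (fun _ => (1:ℝ)))|ℱ n]
        =ᵐ[P] fun ω => U n ω +
          ((α * (X n ω : ℝ) + β * (Y n ω : ℝ)) / ((α + β) * ((X n ω : ℝ) + (Y n ω : ℝ)))
          - (α * (Y n ω : ℝ) + β * (X n ω : ℝ)) / ((α + β) * ((X n ω : ℝ) + (Y n ω : ℝ)))) := by
      filter_upwards [e2, e4, e5] with ω g2 g4 g5
      simp only [Pi.add_apply]
      rw [e3, g2]
      simp only [Pi.sub_apply]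
      rw [g4, g5]
    refine e6.trans ?_
    filter_upwards [hSsum] with ω hω
    have hxy : (X n ω : ℝ) + (Y n ω : ℝ) = s + n := by
      rw [hsdef]; exact_mod_cast congrArg (Nat.cast : ℕ → ℝ) (hω n)
    have hsn : (0:ℝ) < s + n := by positivity
    have hxyne : (X n ω : ℝ) + (Y n ω : ℝ) ≠ 0 := by rw [hxy]; exact ne_of_gt hsn
    rw [hU, hρ]
    simp only
    rw [← hxy]
    field_simp
    ring
  -- conditional expectation of M
  have hcondM : ∀ n, P[M (n+1) | ℱ n] =ᵐ[P] M n := by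
    intro n
    have h1 : M (n+1) = (c (n+1))⁻¹ • U (n+1) := rfl
    have h2 := condExp_smul (μ := P) (m := ℱ n) ((c (n+1))⁻¹) (U (n+1))
    rw [h1]
    refine h2.trans ?_
    filter_upwards [hcondU n] with ω hω
    simp only [Pi.smul_apply, smul_eq_mul]
    rw [hω, hM]
    simp only
    have hc2 : c (n+1) = c n * (1 + ρ/(s+n)) := cpr_succ ρ s n
    have hfne : (1 + ρ/(s+n)) ≠ 0 := ne_of_gt (hfac n)
    rw [hc2, mul_inv, mul_assoc, inv_mul_cancel_left₀ hfne]
  -- martingale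
  have hmart : Martingale M ℱ P := by
    refine ⟨fun n => hMsm n, fun i j hij => ?_⟩
    induction j, hij using Nat.le_induction with
    | base => exact Filter.EventuallyEq.of_eq (condExp_of_stronglyMeasurable (ℱ.le i) (hMsm i) (hMint i))
    | succ j hij ih =>
      have h1 : P[M (j+1) | ℱ i] =ᵐ[P] P[P[M (j+1) | ℱ j] | ℱ i] :=
        (condExp_condExp_of_le (ℱ.mono hij) (ℱ.le j)).symm
      exact h1.trans ((condExp_congr_ae (hcondM j)).trans ih)
  -- increment bound
  have hD : ∀ n, ∀ᵐ ω ∂P, |M (n+1) ω - M n ω| ≤ 2 * (c (n+1))⁻¹ := by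
    intro n
    filter_upwards [hstep n, hUb] with ω hω hUbω
    have hsn : (0:ℝ) < s + n := by positivity
    have hfne : (1 + ρ/(s+n)) ≠ 0 := ne_of_gt (hfac n)
    have hc2 : c (n+1) = c n * (1 + ρ/(s+n)) := cpr_succ ρ s n
    have hrew : M (n+1) ω - M n ω
        = (c (n+1))⁻¹ * ((U (n+1) ω - U n ω) - (ρ/(s+n)) * U n ω) := by
      rw [hM]
      simp only
      rw [hc2]
      have h1 : c n ≠ 0 := hcne n
      field_simp
      ring
    have hΔ : |U (n+1) ω - U n ω| = 1 := by
      rcases hω with ⟨h1, h2⟩ | ⟨h1, h2⟩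
      · have he : U (n+1) ω - U n ω = 1 := by
          rw [hU]; simp only [h1, h2]; push_cast; ring
        rw [he]; norm_num
      · have he : U (n+1) ω - U n ω = -1 := by
          rw [hU]; simp only [h1, h2]; push_cast; ring
        rw [he]; norm_num
    have hb2 : |(ρ/(s+n)) * U n ω| ≤ ρ := by
      rw [abs_mul, abs_of_nonneg (div_nonneg hρ0 hsn.le)]
      calc ρ/(s+n) * |U n ω| ≤ ρ/(s+n) * (s+n) :=
            mul_le_mul_of_nonneg_left (hUbω n) (div_nonneg hρ0 hsn.le)
        _ = ρ := by field_simp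
    have htri : |(U (n+1) ω - U n ω) - (ρ/(s+n)) * U n ω|
        ≤ |U (n+1) ω - U n ω| + |(ρ/(s+n)) * U n ω| := by
      rw [sub_eq_add_neg]
      refine (abs_add_le _ _).trans ?_
      rw [abs_neg]
    have hiv : (0:ℝ) ≤ (c (n+1))⁻¹ := inv_nonneg.mpr (hcpos (n+1)).le
    rw [hrew, abs_mul, abs_of_nonneg hiv]
    have h2' : |(U (n+1) ω - U n ω) - (ρ/(s+n)) * U n ω| ≤ 2 := by
      rw [hΔ] at htri
      linarith
    calc (c (n+1))⁻¹ * |(U (n+1) ω - U n ω) - (ρ/(s+n)) * U n ω|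
        ≤ (c (n+1))⁻¹ * 2 := mul_le_mul_of_nonneg_left h2' hiv
      _ = 2 * (c (n+1))⁻¹ := mul_comm _ _
  -- integrability of squares and products
  have hsqint : ∀ n, Integrable (fun ω => (M n ω)^2) P := by
    intro n
    refine hintb _ ((s+n)^2) (by exact (hMm n).pow 2) ?_
    filter_upwards [hMb n] with ω h
    calc |(M n ω)^2| = |M n ω|^2 := by rw [abs_pow]
      _ ≤ (s+n)^2 := pow_le_pow_left₀ (abs_nonneg _) h 2
  have hprodint : ∀ n, Integrable (fun ω => M n ω * M (n+1) ω) P := by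
    intro n
    refine hintb _ ((s+n) * (s+((n+1:ℕ):ℝ))) ((hMm n).mul (hMm (n+1))) ?_
    filter_upwards [hMb n, hMb (n+1)] with ω h1 h2
    rw [abs_mul]
    have hnn : (0:ℝ) ≤ s + ((n+1:ℕ):ℝ) := by positivity
    exact mul_le_mul h1 h2 (abs_nonneg _) (by positivity)
  have hDint : ∀ n, Integrable (fun ω => (M (n+1) ω - M n ω)^2) P := by
    intro n
    refine hintb _ ((2 * (c (n+1))⁻¹)^2)
      (by exact ((hMm (n+1)).sub (hMm n)).pow 2) ?_
    filter_upwards [hD n] with ω h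
    calc |(M (n+1) ω - M n ω)^2| = |M (n+1) ω - M n ω|^2 := by rw [abs_pow]
      _ ≤ (2 * (c (n+1))⁻¹)^2 := pow_le_pow_left₀ (abs_nonneg _) h 2
  -- orthogonality
  have hortho : ∀ n, ∫ ω, M n ω * M (n+1) ω ∂P = ∫ ω, (M n ω)^2 ∂P := by
    intro n
    have hpi : Integrable (M n * M (n+1)) P := hprodint n
    have h1 := condExp_mul_of_stronglyMeasurable_left (μ := P) (hMsm n) hpi (hMint (n+1))
    have h2 : P[M n * M (n+1) | ℱ n] =ᵐ[P] fun ω => (M n ω)^2 := by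
      refine h1.trans ?_
      filter_upwards [hcondM n] with ω hω
      rw [Pi.mul_apply, hω]
      ring
    calc ∫ ω, M n ω * M (n+1) ω ∂P = ∫ ω, (M n * M (n+1)) ω ∂P := by rfl
      _ = ∫ ω, (P[M n * M (n+1) | ℱ n]) ω ∂P := (integral_condExp (ℱ.le n)).symm
      _ = ∫ ω, (M n ω)^2 ∂P := integral_congr_ae h2
  -- one-step second moment bound
  have hstep2 : ∀ n, ∫ ω, (M (n+1) ω)^2 ∂P
      ≤ ∫ ω, (M n ω)^2 ∂P + 4 * ((c (n+1))⁻¹)^2 := by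
    intro n
    have hiden : ∀ ω, (M (n+1) ω)^2
        = (M (n+1) ω - M n ω)^2 + 2 * (M n ω * M (n+1) ω) - (M n ω)^2 := by
      intro ω; ring
    have hI1 : Integrable (fun ω => (M (n+1) ω - M n ω)^2 + 2 * (M n ω * M (n+1) ω)) P :=
      (hDint n).add ((hprodint n).const_mul 2)
    have e1 : ∫ ω, (M (n+1) ω)^2 ∂P
        = ∫ ω, ((M (n+1) ω - M n ω)^2 + 2 * (M n ω * M (n+1) ω) - (M n ω)^2) ∂P :=
      integral_congr_ae (Eventually.of_forall (fun ω => hiden ω))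
    rw [e1, integral_sub hI1 (hsqint n),
      integral_add (hDint n) ((hprodint n).const_mul 2), integral_const_mul]
    rw [hortho n]
    have e3 : ∫ ω, (M (n+1) ω - M n ω)^2 ∂P ≤ 4 * ((c (n+1))⁻¹)^2 := by
      have hmono : ∫ ω, (M (n+1) ω - M n ω)^2 ∂P
          ≤ ∫ _ω, (2 * (c (n+1))⁻¹)^2 ∂P := by
        refine integral_mono_ae (hDint n) (integrable_const _) ?_
        filter_upwards [hD n] with ω h
        have := abs_le.mp h
        exact sq_le_sq' (by linarith) this.2
      rw [integral_const] at hmono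
      simp only [probReal_univ, smul_eq_mul, one_mul] at hmono
      calc ∫ ω, (M (n+1) ω - M n ω)^2 ∂P ≤ (2 * (c (n+1))⁻¹)^2 := hmono
        _ = 4 * ((c (n+1))⁻¹)^2 := by ring
    linarith
  -- uniform second moment bound
  have hM0 : ∫ ω, (M 0 ω)^2 ∂P = ((x0:ℝ) - y0)^2 := by
    have hc0 : c 0 = 1 := by simp [hcdef, cpr]
    have heq : (fun ω => (M 0 ω)^2) = fun _ => ((x0:ℝ) - y0)^2 := by
      funext ω
      rw [hM, hU]
      simp only [hX0, hY0, hc0]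
      norm_num
    rw [heq, integral_const]
    simp [measure_univ]
  have hsum : Summable (fun k : ℕ => ((c (k+1))⁻¹)^2 : ℕ → ℝ) := by
    have h := cpr_summable hρhalf hρ1 hs
    rw [← hcdef] at h
    exact (summable_nat_add_iff (f := fun n => ((c n)⁻¹)^2) 1).mpr h
  set Bd : ℝ := ((x0:ℝ) - y0)^2 + 4 * ∑' k, ((c (k+1))⁻¹)^2 with hBdd
  have hVb : ∀ n, ∫ ω, (M n ω)^2 ∂P ≤ Bd := by
    have hpart : ∀ n, ∫ ω, (M n ω)^2 ∂P
        ≤ ((x0:ℝ) - y0)^2 + 4 * ∑ k ∈ Finset.range n, ((c (k+1))⁻¹)^2 := by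
      intro n
      induction n with
      | zero => simp [hM0]
      | succ n ih =>
        have h1 := hstep2 n
        rw [Finset.sum_range_succ, mul_add]
        linarith
    intro n
    refine (hpart n).trans ?_
    have h2 := Summable.sum_le_tsum (Finset.range n)
      (fun k _ => by positivity) hsum
    have h3 : 4 * ∑ k ∈ Finset.range n, ((c (k+1))⁻¹)^2
        ≤ 4 * ∑' k, ((c (k+1))⁻¹)^2 := by linarith
    rw [hBdd]
    linarith
  -- L¹ bound
  set R : NNReal := Real.toNNReal ((Bd + 1)/2) with hR
  have hL1 : ∀ n, eLpNorm (M n) 1 P ≤ (R : ENNReal) := by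
    intro n
    have hint1 : Integrable (fun ω => ((M n ω)^2 + 1)/2) P :=
      ((hsqint n).add (integrable_const 1)).div_const 2
    have hmono : ∫ ω, |M n ω| ∂P ≤ ∫ ω, ((M n ω)^2 + 1)/2 ∂P := by
      refine integral_mono_ae (hMint n).abs hint1 ?_
      refine Eventually.of_forall (fun ω => ?_)
      nlinarith [sq_nonneg (|M n ω| - 1), sq_abs (M n ω), abs_nonneg (M n ω)]
    have hval : ∫ ω, ((M n ω)^2 + 1)/2 ∂P = ((∫ ω, (M n ω)^2 ∂P) + 1)/2 := by
      rw [integral_div, integral_add (hsqint n) (integrable_const 1), integral_const]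
      simp [measure_univ]
    rw [hval] at hmono
    have habs : ∫ ω, |M n ω| ∂P ≤ (Bd + 1)/2 := by
      refine hmono.trans ?_
      gcongr
      exact hVb n
    have heq : eLpNorm (M n) 1 P = ENNReal.ofReal (∫ ω, ‖M n ω‖ ∂P) := by
      rw [eLpNorm_one_eq_lintegral_enorm, ← ofReal_integral_norm_eq_lintegral_enorm (hMint n)]
    rw [heq, hR]
    have : ENNReal.ofReal (∫ ω, ‖M n ω‖ ∂P) ≤ ENNReal.ofReal ((Bd + 1)/2) :=
      ENNReal.ofReal_le_ofReal (by simpa [Real.norm_eq_abs] using habs)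
    exact this
  -- martingale convergence
  have hconv := hmart.submartingale.ae_tendsto_limitProcess hL1
  obtain ⟨K, hK, hKT⟩ := cpr_tendsto hρ0 hρ1 hs
  refine ⟨fun ω => K * (ℱ.limitProcess M P ω), ?_⟩
  filter_upwards [hconv] with ω hω
  have h := hKT.mul hω
  refine Tendsto.congr (fun n => ?_) h
  show ((n:ℝ)^(-ρ) * cpr ρ s n) * M n ω = (n:ℝ)^(-ρ) * ((X n ω:ℝ) - (Y n ω:ℝ))
  rw [hM, hU]
  simp only
  rw [← hcdef]
  rw [mul_assoc, mul_inv_cancel_left₀ (hcne n)]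
end

section
/- For every n ≥ 0, almost surely E[U_{n+1} | 𝓕_n] = U_n·a_n(1) and E[U_{n+1}² | 𝓕_n] = U_n²·a_n(2) + 1. -/
open MeasureTheory Filter

set_option maxHeartbeats 1000000 in
/-- For the auxiliary process `(Xₙ, Yₙ)`, with `Uₙ = Xₙ − Yₙ`,
`s = (α + β)(x₀ + y₀)` and `aₙ(j) = 1 + (α − β)j/(s + (α + β)n)`, one has, for every
`n ≥ 0`, almost surely `E[U_{n+1} | ℱ n] = Uₙ·aₙ(1)` and
`E[U_{n+1}² | ℱ n] = Uₙ²·aₙ(2) + 1`. -/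
theorem stmt_1
    {Ω : Type*} {m0 : MeasurableSpace Ω} (P : Measure Ω) [IsProbabilityMeasure P]
    (ℱ : Filtration ℕ m0)
    (α β : ℝ) (hα : 0 ≤ α) (hβ : 0 ≤ β) (hαβ : 0 < α + β)
    (ρ : ℝ) (hρ : ρ = (α - β) / (α + β))
    (x0 y0 : ℕ) (hx0y0 : 1 ≤ x0 + y0)
    (X Y : ℕ → Ω → ℕ)
    (hXmeas : ∀ n, Measurable[ℱ n] (X n)) (hYmeas : ∀ n, Measurable[ℱ n] (Y n))
    (hX0 : ∀ ω, X 0 ω = x0) (hY0 : ∀ ω, Y 0 ω = y0)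
    (hstep : ∀ n, ∀ᵐ ω ∂P,
      (X (n + 1) ω = X n ω + 1 ∧ Y (n + 1) ω = Y n ω) ∨
      (X (n + 1) ω = X n ω ∧ Y (n + 1) ω = Y n ω + 1))
    (hup : ∀ n,
      P[({ω' | X (n + 1) ω' = X n ω' + 1 ∧ Y (n + 1) ω' = Y n ω'} : Set Ω).indicator
          (fun _ => (1 : ℝ)) | ℱ n]
        =ᵐ[P] fun ω => (α * (X n ω : ℝ) + β * (Y n ω : ℝ)) /
          ((α + β) * ((X n ω : ℝ) + (Y n ω : ℝ))))
    (hdown : ∀ n,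
      P[({ω' | X (n + 1) ω' = X n ω' ∧ Y (n + 1) ω' = Y n ω' + 1} : Set Ω).indicator
          (fun _ => (1 : ℝ)) | ℱ n]
        =ᵐ[P] fun ω => (α * (Y n ω : ℝ) + β * (X n ω : ℝ)) /
          ((α + β) * ((X n ω : ℝ) + (Y n ω : ℝ))))
    (s : ℝ) (hs : s = (α + β) * ((x0 : ℝ) + (y0 : ℝ)))
    (a : ℕ → ℕ → ℝ) (ha : ∀ n j, a n j = 1 + (α - β) * (j : ℝ) / (s + (α + β) * (n : ℝ))) :
    ∀ n : ℕ,
      (P[fun ω => ((X (n + 1) ω : ℝ) - (Y (n + 1) ω : ℝ)) | ℱ n]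
        =ᵐ[P] fun ω => ((X n ω : ℝ) - (Y n ω : ℝ)) * a n 1) ∧
      (P[fun ω => ((X (n + 1) ω : ℝ) - (Y (n + 1) ω : ℝ)) ^ 2 | ℱ n]
        =ᵐ[P] fun ω => ((X n ω : ℝ) - (Y n ω : ℝ)) ^ 2 * a n 2 + 1) := by
  -- sum process is deterministic a.s.
  have hS : ∀ n, ∀ᵐ ω ∂P, X n ω + Y n ω = x0 + y0 + n := by
    intro n
    induction n with
    | zero => filter_upwards with ω; simp [hX0, hY0]
    | succ k ih =>
      filter_upwards [hstep k, ih] with ω h1 h2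
      rcases h1 with ⟨hx, hy⟩ | ⟨hx, hy⟩ <;> omega
  intro n
  have hm : ℱ n ≤ m0 := ℱ.le n
  -- basic measurability
  have hXr : ∀ k, Measurable[ℱ k] (fun ω => (X k ω : ℝ)) :=
    fun k => measurable_from_top.comp (hXmeas k)
  have hYr : ∀ k, Measurable[ℱ k] (fun ω => (Y k ω : ℝ)) :=
    fun k => measurable_from_top.comp (hYmeas k)
  have hUsm : ∀ k, StronglyMeasurable[ℱ k] (fun ω => (X k ω : ℝ) - (Y k ω : ℝ)) :=
    fun k => ((hXr k).sub (hYr k)).stronglyMeasurable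
  -- integrability of U k and its square
  have hUb : ∀ k, ∀ᵐ ω ∂P, |(X k ω : ℝ) - (Y k ω : ℝ)| ≤ ((x0 + y0 + k : ℕ) : ℝ) := by
    intro k
    filter_upwards [hS k] with ω h
    have hx : (X k ω : ℝ) + (Y k ω : ℝ) = ((x0 + y0 + k : ℕ) : ℝ) := by
      push_cast; exact_mod_cast congrArg (Nat.cast : ℕ → ℝ) h
    have hX0' : (0:ℝ) ≤ (X k ω : ℝ) := Nat.cast_nonneg _
    have hY0' : (0:ℝ) ≤ (Y k ω : ℝ) := Nat.cast_nonneg _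
    rw [abs_le]; constructor <;> nlinarith
  have hUint : ∀ k, Integrable (fun ω => (X k ω : ℝ) - (Y k ω : ℝ)) P := by
    intro k
    refine (integrable_const (((x0 + y0 + k : ℕ) : ℝ))).mono'
      (((hUsm k).mono (ℱ.le k)).aestronglyMeasurable) ?_
    filter_upwards [hUb k] with ω h
    simpa using h
  have hU2int : ∀ k, Integrable (fun ω => ((X k ω : ℝ) - (Y k ω : ℝ)) ^ 2) P := by
    intro k
    refine (integrable_const ((((x0 + y0 + k : ℕ) : ℝ)) ^ 2)).mono'
      ((((hUsm k).mono (ℱ.le k)).aestronglyMeasurable).pow 2) ?_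
    filter_upwards [hUb k] with ω h
    have := abs_nonneg ((X k ω : ℝ) - (Y k ω : ℝ))
    simp only [Real.norm_eq_abs, abs_pow]
    calc |(X k ω : ℝ) - (Y k ω : ℝ)| ^ 2 ≤ ((x0 + y0 + k : ℕ) : ℝ) ^ 2 := by
          exact pow_le_pow_left₀ (abs_nonneg _) h 2
      _ = _ := rfl
  -- the two events
  set Sup : Set Ω := {ω' | X (n + 1) ω' = X n ω' + 1 ∧ Y (n + 1) ω' = Y n ω'} with hSup
  set Sdn : Set Ω := {ω' | X (n + 1) ω' = X n ω' ∧ Y (n + 1) ω' = Y n ω' + 1} with hSdn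
  have hSupMeas : MeasurableSet Sup := by
    refine MeasurableSet.inter ?_ ?_
    · exact measurableSet_eq_fun ((hXmeas (n+1)).mono (ℱ.le (n+1)) le_rfl)
        (((hXmeas n).mono hm le_rfl).add measurable_const)
    · exact measurableSet_eq_fun ((hYmeas (n+1)).mono (ℱ.le (n+1)) le_rfl)
        ((hYmeas n).mono hm le_rfl)
  have hSdnMeas : MeasurableSet Sdn := by
    refine MeasurableSet.inter ?_ ?_
    · exact measurableSet_eq_fun ((hXmeas (n+1)).mono (ℱ.le (n+1)) le_rfl)
        ((hXmeas n).mono hm le_rfl)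
    · exact measurableSet_eq_fun ((hYmeas (n+1)).mono (ℱ.le (n+1)) le_rfl)
        (((hYmeas n).mono hm le_rfl).add measurable_const)
  set Iup : Ω → ℝ := Sup.indicator (fun _ => (1 : ℝ)) with hIup
  set Idn : Ω → ℝ := Sdn.indicator (fun _ => (1 : ℝ)) with hIdn
  have hIupInt : Integrable Iup P := (integrable_const (1:ℝ)).indicator hSupMeas
  have hIdnInt : Integrable Idn P := (integrable_const (1:ℝ)).indicator hSdnMeas
  -- pointwise indicator values
  have hIval : ∀ᵐ ω ∂P,
      ((X (n+1) ω : ℝ) - (Y (n+1) ω : ℝ)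
        = ((X n ω : ℝ) - (Y n ω : ℝ)) + (Iup ω - Idn ω)) ∧
      (((X (n+1) ω : ℝ) - (Y (n+1) ω : ℝ)) ^ 2
        = ((X n ω : ℝ) - (Y n ω : ℝ)) ^ 2
          + (2 * ((X n ω : ℝ) - (Y n ω : ℝ)) * Iup ω
             - 2 * ((X n ω : ℝ) - (Y n ω : ℝ)) * Idn ω) + 1) := by
    filter_upwards [hstep n] with ω h
    rcases h with ⟨hx, hy⟩ | ⟨hx, hy⟩
    · have hmem : ω ∈ Sup := ⟨hx, hy⟩
      have hnmem : ω ∉ Sdn := by intro hc; exact absurd (hc.1.symm.trans hx) (by omega)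
      have e1 : Iup ω = 1 := Set.indicator_of_mem hmem _
      have e2 : Idn ω = 0 := Set.indicator_of_notMem hnmem _
      rw [e1, e2, hx, hy]; push_cast; constructor <;> ring
    · have hmem : ω ∈ Sdn := ⟨hx, hy⟩
      have hnmem : ω ∉ Sup := by intro hc; exact absurd (hc.1.symm.trans hx) (by omega)
      have e1 : Iup ω = 0 := Set.indicator_of_notMem hnmem _
      have e2 : Idn ω = 1 := Set.indicator_of_mem hmem _
      rw [e1, e2, hx, hy]; push_cast; constructor <;> ring
  -- denominator positivity facts
  have hTpos : (0:ℝ) < ((x0 + y0 + n : ℕ) : ℝ) := by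
    have : 1 ≤ x0 + y0 + n := by omega
    exact_mod_cast Nat.lt_of_lt_of_le Nat.zero_lt_one this
  have hDen : s + (α + β) * (n : ℝ) = (α + β) * ((x0 + y0 + n : ℕ) : ℝ) := by
    rw [hs]; push_cast; ring
  have hDenne : s + (α + β) * (n : ℝ) ≠ 0 := by
    rw [hDen]; positivity
  constructor
  · -- first moment
    have step1 : P[fun ω => ((X (n + 1) ω : ℝ) - (Y (n + 1) ω : ℝ)) | ℱ n]
        =ᵐ[P] P[(fun ω => ((X n ω : ℝ) - (Y n ω : ℝ))) + (Iup - Idn) | ℱ n] := by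
      refine condExp_congr_ae ?_
      filter_upwards [hIval] with ω h
      simpa using h.1
    have step2 : P[(fun ω => ((X n ω : ℝ) - (Y n ω : ℝ))) + (Iup - Idn) | ℱ n]
        =ᵐ[P] P[fun ω => ((X n ω : ℝ) - (Y n ω : ℝ)) | ℱ n] + (P[Iup | ℱ n] - P[Idn | ℱ n]) :=
      (condExp_add (hUint n) (hIupInt.sub hIdnInt) _).trans
        (EventuallyEq.add (EventuallyEq.refl _ _) (condExp_sub hIupInt hIdnInt _))
    have hUc : P[fun ω => ((X n ω : ℝ) - (Y n ω : ℝ)) | ℱ n]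
        = fun ω => ((X n ω : ℝ) - (Y n ω : ℝ)) :=
      condExp_of_stronglyMeasurable hm (hUsm n) (hUint n)
    refine (step1.trans (step2.trans ?_))
    rw [hUc]
    filter_upwards [hup n, hdown n, hS n] with ω h1 h2 h3
    have hxy : (X n ω : ℝ) + (Y n ω : ℝ) = ((x0 + y0 + n : ℕ) : ℝ) := by
      exact_mod_cast congrArg (Nat.cast : ℕ → ℝ) h3
    simp only [Pi.add_apply, Pi.sub_apply, hIup, hIdn, hSup, hSdn, h1, h2, ha, hDen, hxy]
    have hne : (α + β) * ((x0 + y0 + n : ℕ) : ℝ) ≠ 0 := by positivity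
    push_cast
    field_simp
    ring
  · -- second moment
    have step1 : P[fun ω => ((X (n + 1) ω : ℝ) - (Y (n + 1) ω : ℝ)) ^ 2 | ℱ n]
        =ᵐ[P] P[(fun ω => ((X n ω : ℝ) - (Y n ω : ℝ)) ^ 2)
            + (((fun ω => 2 * ((X n ω : ℝ) - (Y n ω : ℝ))) * Iup)
               - ((fun ω => 2 * ((X n ω : ℝ) - (Y n ω : ℝ))) * Idn))
            + (fun _ => (1:ℝ)) | ℱ n] := by
      refine condExp_congr_ae ?_
      filter_upwards [hIval] with ω h
      simpa using h.2
    have hfsm : StronglyMeasurable[ℱ n] (fun ω => 2 * ((X n ω : ℝ) - (Y n ω : ℝ))) :=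
      (stronglyMeasurable_const.mul (hUsm n))
    have hfupInt : Integrable ((fun ω => 2 * ((X n ω : ℝ) - (Y n ω : ℝ))) * Iup) P := by
      refine (integrable_const (2 * ((x0 + y0 + n : ℕ) : ℝ))).mono'
        (((hfsm.mono hm).aestronglyMeasurable).mul hIupInt.1) ?_
      filter_upwards [hUb n] with ω h
      simp only [Pi.mul_apply, Real.norm_eq_abs]
      have hle : |Iup ω| ≤ 1 := by
        rw [hIup]; rcases Set.indicator_eq_zero_or_self Sup (fun _ => (1:ℝ)) ω with h'|h' <;>
          simp [h']
      calc |2 * ((X n ω : ℝ) - (Y n ω : ℝ)) * Iup ω|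
          = |2 * ((X n ω : ℝ) - (Y n ω : ℝ))| * |Iup ω| := abs_mul _ _
        _          ≤ |2 * ((X n ω : ℝ) - (Y n ω : ℝ))| * 1 := by
            exact mul_le_mul_of_nonneg_left hle (abs_nonneg _)
        _ ≤ 2 * ((x0 + y0 + n : ℕ) : ℝ) := by
            rw [mul_one, abs_mul, abs_two]; linarith
    have hfdnInt : Integrable ((fun ω => 2 * ((X n ω : ℝ) - (Y n ω : ℝ))) * Idn) P := by
      refine (integrable_const (2 * ((x0 + y0 + n : ℕ) : ℝ))).mono'
        (((hfsm.mono hm).aestronglyMeasurable).mul hIdnInt.1) ?_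
      filter_upwards [hUb n] with ω h
      simp only [Pi.mul_apply, Real.norm_eq_abs]
      have hle : |Idn ω| ≤ 1 := by
        rw [hIdn]; rcases Set.indicator_eq_zero_or_self Sdn (fun _ => (1:ℝ)) ω with h'|h' <;>
          simp [h']
      calc |2 * ((X n ω : ℝ) - (Y n ω : ℝ)) * Idn ω|
          = |2 * ((X n ω : ℝ) - (Y n ω : ℝ))| * |Idn ω| := abs_mul _ _
        _          ≤ |2 * ((X n ω : ℝ) - (Y n ω : ℝ))| * 1 := by
            exact mul_le_mul_of_nonneg_left hle (abs_nonneg _)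
        _ ≤ 2 * ((x0 + y0 + n : ℕ) : ℝ) := by
            rw [mul_one, abs_mul, abs_two]; linarith
    have step2 : P[(fun ω => ((X n ω : ℝ) - (Y n ω : ℝ)) ^ 2)
            + (((fun ω => 2 * ((X n ω : ℝ) - (Y n ω : ℝ))) * Iup)
               - ((fun ω => 2 * ((X n ω : ℝ) - (Y n ω : ℝ))) * Idn))
            + (fun _ => (1:ℝ)) | ℱ n]
        =ᵐ[P]
          P[fun ω => ((X n ω : ℝ) - (Y n ω : ℝ)) ^ 2 | ℱ n]
          + (P[(fun ω => 2 * ((X n ω : ℝ) - (Y n ω : ℝ))) * Iup | ℱ n]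
             - P[(fun ω => 2 * ((X n ω : ℝ) - (Y n ω : ℝ))) * Idn | ℱ n])
          + fun _ => (1:ℝ) := by
      refine (condExp_add ((hU2int n).add (hfupInt.sub hfdnInt)) (integrable_const 1) _).trans ?_
      refine EventuallyEq.add ?_ ?_
      · exact (condExp_add (hU2int n) (hfupInt.sub hfdnInt) _).trans
          (EventuallyEq.add (EventuallyEq.refl _ _) (condExp_sub hfupInt hfdnInt _))
      · rw [condExp_const hm]
    have hU2c : P[fun ω => ((X n ω : ℝ) - (Y n ω : ℝ)) ^ 2 | ℱ n]
        = fun ω => ((X n ω : ℝ) - (Y n ω : ℝ)) ^ 2 :=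
      condExp_of_stronglyMeasurable hm ((hUsm n).pow 2) (hU2int n)
    have hmulUp : P[(fun ω => 2 * ((X n ω : ℝ) - (Y n ω : ℝ))) * Iup | ℱ n]
        =ᵐ[P] (fun ω => 2 * ((X n ω : ℝ) - (Y n ω : ℝ))) * P[Iup | ℱ n] :=
      condExp_mul_of_stronglyMeasurable_left hfsm hfupInt hIupInt
    have hmulDn : P[(fun ω => 2 * ((X n ω : ℝ) - (Y n ω : ℝ))) * Idn | ℱ n]
        =ᵐ[P] (fun ω => 2 * ((X n ω : ℝ) - (Y n ω : ℝ))) * P[Idn | ℱ n] :=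
      condExp_mul_of_stronglyMeasurable_left hfsm hfdnInt hIdnInt
    refine (step1.trans (step2.trans ?_))
    rw [hU2c]
    filter_upwards [hmulUp, hmulDn, hup n, hdown n, hS n] with ω e1 e2 h1 h2 h3
    have hxy : (X n ω : ℝ) + (Y n ω : ℝ) = ((x0 + y0 + n : ℕ) : ℝ) := by
      exact_mod_cast congrArg (Nat.cast : ℕ → ℝ) h3
    simp only [Pi.add_apply, Pi.sub_apply, Pi.mul_apply] at e1 e2 ⊢
    rw [e1, e2, h1, h2, ha, hDen, hxy]
    have hne : (α + β) * ((x0 + y0 + n : ℕ) : ℝ) ≠ 0 := by positivity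
    push_cast
    field_simp
    ring
end

section
/- Suppose ρ > 1/2. Then sup_{n≥1} E[U_n²]/n^{2ρ} < ∞. -/
open MeasureTheory Filter

noncomputable def stmt2f (s : ℕ) (ρ : ℝ) : ℕ → ℝ := fun j => ((s:ℝ) + j + 1) ^ (-(2*ρ))

lemma stmt2f_nonneg (s : ℕ) (ρ : ℝ) (j : ℕ) : 0 ≤ stmt2f s ρ j :=
  Real.rpow_nonneg (by positivity) _

lemma stmt2_aux_sum (ρ : ℝ) (hρ : 1/2 < ρ) (s : ℕ) :
    Summable (stmt2f s ρ) := by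
  have h0 : Summable (fun j : ℕ => ((j:ℝ)) ^ (-(2*ρ))) :=
    Real.summable_nat_rpow.mpr (by linarith)
  have h1 : Summable (fun j : ℕ => ((j:ℝ) + 1) ^ (-(2*ρ))) := by
    have := (summable_nat_add_iff 1).mpr h0
    simpa [Nat.cast_add, Nat.cast_one] using this
  refine Summable.of_nonneg_of_le (fun j => stmt2f_nonneg s ρ j) (fun j => ?_) h1
  apply Real.rpow_le_rpow_of_nonpos (by positivity)
    (by have : (0:ℝ) ≤ s := Nat.cast_nonneg s; linarith) (by linarith)

lemma stmt2_aux_growth (ρ : ℝ) (hρ : 1/2 < ρ) (s : ℕ) (hs : 1 ≤ s) (m : ℕ → ℝ)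
    (hm0 : 0 ≤ m 0)
    (hrec : ∀ n : ℕ, m (n+1) = (1 + 2*ρ/((s:ℝ)+n)) * m n + 1) :
    ∃ C : ℝ, ∀ n : ℕ, 1 ≤ n → m n / (n:ℝ)^(2*ρ) ≤ C := by
  have hsp : (0:ℝ) < s := by exact_mod_cast hs
  have h2ρ : (1:ℝ) ≤ 2*ρ := by linarith
  have hfs : Summable (stmt2f s ρ) := stmt2_aux_sum ρ hρ s
  have hfnn : ∀ j, 0 ≤ stmt2f s ρ j := stmt2f_nonneg s ρ
  have hT0nn : 0 ≤ m 0 / (s:ℝ)^(2*ρ) := div_nonneg hm0 (Real.rpow_nonneg hsp.le _)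
  have hbound : ∀ n, m n ≤ ((s:ℝ)+n)^(2*ρ) *
      (m 0 / (s:ℝ)^(2*ρ) + ∑ j ∈ Finset.range n, stmt2f s ρ j) := by
    intro n
    induction n with
    | zero =>
      simp only [Finset.range_zero, Finset.sum_empty, add_zero, Nat.cast_zero]
      rw [mul_comm, div_mul_cancel₀ _ (ne_of_gt (Real.rpow_pos_of_pos hsp _))]
    | succ n ih =>
      have hsn : (0:ℝ) < (s:ℝ)+n := by positivity
      have hc : (0:ℝ) ≤ 1 + 2*ρ/((s:ℝ)+n) := by positivity
      have hQ : 0 ≤ m 0 / (s:ℝ)^(2*ρ) + ∑ j ∈ Finset.range n, stmt2f s ρ j :=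
        add_nonneg hT0nn (Finset.sum_nonneg fun j _ => hfnn j)
      have bern : (1 + 2*ρ/((s:ℝ)+n)) * ((s:ℝ)+n)^(2*ρ) ≤ ((s:ℝ)+n+1)^(2*ρ) := by
        have h1 : 1 + (2*ρ) * (1/((s:ℝ)+n)) ≤ (1 + 1/((s:ℝ)+n))^(2*ρ) := by
          apply one_add_mul_self_le_rpow_one_add _ h2ρ
          have : (0:ℝ) ≤ 1/((s:ℝ)+n) := by positivity
          linarith
        have h2 : (1 + 1/((s:ℝ)+n))^(2*ρ) * ((s:ℝ)+n)^(2*ρ) = ((s:ℝ)+n+1)^(2*ρ) := by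
          rw [← Real.mul_rpow (by positivity) hsn.le]
          congr 1
          field_simp
        calc (1 + 2*ρ/((s:ℝ)+n)) * ((s:ℝ)+n)^(2*ρ)
            ≤ (1 + 1/((s:ℝ)+n))^(2*ρ) * ((s:ℝ)+n)^(2*ρ) := by
              apply mul_le_mul_of_nonneg_right _ (Real.rpow_nonneg hsn.le _)
              simpa [mul_one_div, div_eq_mul_inv] using h1
          _ = ((s:ℝ)+n+1)^(2*ρ) := h2
      have hfn1 : ((s:ℝ)+n+1)^(2*ρ) * stmt2f s ρ n = 1 := by
        unfold stmt2f
        rw [← Real.rpow_add (by positivity)]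
        simp
      have hcast : ((s:ℝ)+((n+1:ℕ):ℝ)) = ((s:ℝ)+n+1) := by push_cast; ring
      calc m (n+1) = (1 + 2*ρ/((s:ℝ)+n)) * m n + 1 := hrec n
        _ ≤ (1 + 2*ρ/((s:ℝ)+n)) * (((s:ℝ)+n)^(2*ρ) *
              (m 0 / (s:ℝ)^(2*ρ) + ∑ j ∈ Finset.range n, stmt2f s ρ j)) + 1 := by
            have := mul_le_mul_of_nonneg_left ih hc
            linarith
        _ = ((1 + 2*ρ/((s:ℝ)+n)) * ((s:ℝ)+n)^(2*ρ)) *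
              (m 0 / (s:ℝ)^(2*ρ) + ∑ j ∈ Finset.range n, stmt2f s ρ j) + 1 := by ring
        _ ≤ ((s:ℝ)+n+1)^(2*ρ) *
              (m 0 / (s:ℝ)^(2*ρ) + ∑ j ∈ Finset.range n, stmt2f s ρ j) + 1 := by
            have := mul_le_mul_of_nonneg_right bern hQ
            linarith
        _ = ((s:ℝ)+((n+1:ℕ):ℝ))^(2*ρ) *
              (m 0 / (s:ℝ)^(2*ρ) + ∑ j ∈ Finset.range (n+1), stmt2f s ρ j) := by
            rw [Finset.sum_range_succ, hcast, mul_add, mul_add, mul_add, hfn1]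
            ring
  refine ⟨((s:ℝ)+1)^(2*ρ) * (m 0 / (s:ℝ)^(2*ρ) + ∑' j, stmt2f s ρ j), fun n hn => ?_⟩
  have hnp : (0:ℝ) < n := by exact_mod_cast hn
  have hn1 : (1:ℝ) ≤ n := by exact_mod_cast hn
  have hT : m 0 / (s:ℝ)^(2*ρ) + ∑ j ∈ Finset.range n, stmt2f s ρ j
      ≤ m 0 / (s:ℝ)^(2*ρ) + ∑' j, stmt2f s ρ j :=
    add_le_add_right (hfs.sum_le_tsum _ (fun i _ => hfnn i)) _
  have hTnn : 0 ≤ m 0 / (s:ℝ)^(2*ρ) + ∑' j, stmt2f s ρ j :=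
    add_nonneg hT0nn (tsum_nonneg hfnn)
  have h1 : m n ≤ ((s:ℝ)+n)^(2*ρ) * (m 0 / (s:ℝ)^(2*ρ) + ∑' j, stmt2f s ρ j) :=
    (hbound n).trans (mul_le_mul_of_nonneg_left hT (Real.rpow_nonneg (by positivity) _))
  have h2 : ((s:ℝ)+n)^(2*ρ) ≤ ((s:ℝ)+1)^(2*ρ) * (n:ℝ)^(2*ρ) := by
    rw [← Real.mul_rpow (by positivity) hnp.le]
    apply Real.rpow_le_rpow (by positivity) _ (by linarith)
    nlinarith [mul_le_mul_of_nonneg_left hn1 hsp.le]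
  rw [div_le_iff₀ (Real.rpow_pos_of_pos hnp _)]
  calc m n ≤ ((s:ℝ)+n)^(2*ρ) * (m 0 / (s:ℝ)^(2*ρ) + ∑' j, stmt2f s ρ j) := h1
    _ ≤ (((s:ℝ)+1)^(2*ρ) * (n:ℝ)^(2*ρ)) * (m 0 / (s:ℝ)^(2*ρ) + ∑' j, stmt2f s ρ j) :=
        mul_le_mul_of_nonneg_right h2 hTnn
    _ = ((s:ℝ)+1)^(2*ρ) * (m 0 / (s:ℝ)^(2*ρ) + ∑' j, stmt2f s ρ j) * (n:ℝ)^(2*ρ) := by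
        ring

lemma stmt2_drift (α β ρ x y s : ℝ) (hαβ : α + β ≠ 0) (hs : s ≠ 0)
    (hρ : ρ = (α - β) / (α + β)) (hxy : x + y = s) :
    (x - y) * ((α * x + β * y) / ((α + β) * (x + y)))
      - (x - y) * ((α * y + β * x) / ((α + β) * (x + y)))
      = ρ / s * (x - y) ^ 2 := by
  rw [hxy, hρ]
  field_simp
  ring

lemma stmt2_alg (m IA IB ρ sn : ℝ) (h : IA - IB = ρ / sn * m) :
    m + 2 * IA - 2 * IB + 1 = (1 + 2 * ρ / sn) * m + 1 := by
  linear_combination 2 * h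

/-- For the auxiliary process `(Xₙ, Yₙ)`, with `Uₙ = Xₙ − Yₙ` and
`ρ = (α − β)/(α + β) > 1/2`, one has `sup_{n ≥ 1} E[Uₙ²]/n^(2ρ) < ∞`. -/
theorem stmt_2
    {Ω : Type*} {m0 : MeasurableSpace Ω} (P : Measure Ω) [IsProbabilityMeasure P]
    (ℱ : Filtration ℕ m0)
    (α β : ℝ) (hα : 0 ≤ α) (hβ : 0 ≤ β) (hαβ : 0 < α + β)
    (ρ : ℝ) (hρ : ρ = (α - β) / (α + β))
    (x0 y0 : ℕ) (hx0y0 : 1 ≤ x0 + y0)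
    (X Y : ℕ → Ω → ℕ)
    (hXmeas : ∀ n, Measurable[ℱ n] (X n)) (hYmeas : ∀ n, Measurable[ℱ n] (Y n))
    (hX0 : ∀ ω, X 0 ω = x0) (hY0 : ∀ ω, Y 0 ω = y0)
    (hstep : ∀ n, ∀ᵐ ω ∂P,
      (X (n + 1) ω = X n ω + 1 ∧ Y (n + 1) ω = Y n ω) ∨
      (X (n + 1) ω = X n ω ∧ Y (n + 1) ω = Y n ω + 1))
    (hup : ∀ n,
      P[({ω' | X (n + 1) ω' = X n ω' + 1 ∧ Y (n + 1) ω' = Y n ω'} : Set Ω).indicator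
          (fun _ => (1 : ℝ)) | ℱ n]
        =ᵐ[P] fun ω => (α * (X n ω : ℝ) + β * (Y n ω : ℝ)) /
          ((α + β) * ((X n ω : ℝ) + (Y n ω : ℝ))))
    (hdown : ∀ n,
      P[({ω' | X (n + 1) ω' = X n ω' ∧ Y (n + 1) ω' = Y n ω' + 1} : Set Ω).indicator
          (fun _ => (1 : ℝ)) | ℱ n]
        =ᵐ[P] fun ω => (α * (Y n ω : ℝ) + β * (X n ω : ℝ)) /
          ((α + β) * ((X n ω : ℝ) + (Y n ω : ℝ))))
    (hρhalf : 1 / 2 < ρ) :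
    ∃ C : ℝ, ∀ n : ℕ, 1 ≤ n →
      (∫ ω, ((X n ω : ℝ) - (Y n ω : ℝ)) ^ 2 ∂P) / (n : ℝ) ^ (2 * ρ) ≤ C := by
  have hαβ' : (α + β) ≠ 0 := ne_of_gt hαβ
  have hspos : (0:ℝ) < ((x0 + y0 : ℕ) : ℝ) := by exact_mod_cast hx0y0
  -- measurability
  have hXm : ∀ n, Measurable fun ω => (X n ω : ℝ) :=
    fun n => measurable_from_top.comp ((hXmeas n).mono (ℱ.le n) le_rfl)
  have hYm : ∀ n, Measurable fun ω => (Y n ω : ℝ) :=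
    fun n => measurable_from_top.comp ((hYmeas n).mono (ℱ.le n) le_rfl)
  have hUm : ∀ n, Measurable fun ω => (X n ω : ℝ) - Y n ω := fun n => (hXm n).sub (hYm n)
  -- deterministic total population
  have hS : ∀ n, ∀ᵐ ω ∂P, X n ω + Y n ω = x0 + y0 + n := by
    intro n
    induction n with
    | zero => filter_upwards with ω; simp [hX0, hY0]
    | succ n ih =>
      filter_upwards [hstep n, ih] with ω h1 h2
      rcases h1 with ⟨h, h'⟩ | ⟨h, h'⟩ <;> omega
  -- a.e. bound on |U n|
  have hUb : ∀ n, ∀ᵐ ω ∂P, |(X n ω : ℝ) - Y n ω| ≤ ((x0 + y0 : ℕ) : ℝ) + n := by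
    intro n
    filter_upwards [hS n] with ω h
    have hXY : (X n ω : ℝ) + Y n ω = ((x0 + y0 : ℕ) : ℝ) + n := by exact_mod_cast h
    have h1 : (0:ℝ) ≤ X n ω := Nat.cast_nonneg _
    have h2 : (0:ℝ) ≤ Y n ω := Nat.cast_nonneg _
    rw [abs_le]; constructor <;> linarith
  -- integrability from a.e. bounds
  have hInt : ∀ (f : Ω → ℝ) (C : ℝ), Measurable f → (∀ᵐ ω ∂P, |f ω| ≤ C) →
      Integrable f P := fun f C hf hb =>
    ⟨hf.aestronglyMeasurable,
      HasFiniteIntegral.of_bounded (C := C) (by simpa [Real.norm_eq_abs] using hb)⟩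
  have hU2int : ∀ n, Integrable (fun ω => ((X n ω : ℝ) - Y n ω) ^ 2) P := by
    intro n
    refine hInt _ ((((x0 + y0 : ℕ) : ℝ) + n) ^ 2) ((hUm n).pow_const 2) ?_
    filter_upwards [hUb n] with ω h
    rw [abs_of_nonneg (sq_nonneg _), ← sq_abs]
    exact pow_le_pow_left₀ (abs_nonneg _) h 2
  -- the key recursion
  have hrec : ∀ n : ℕ, (∫ ω, ((X (n+1) ω : ℝ) - Y (n+1) ω) ^ 2 ∂P)
      = (1 + 2 * ρ / (((x0 + y0 : ℕ) : ℝ) + n)) *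
        (∫ ω, ((X n ω : ℝ) - Y n ω) ^ 2 ∂P) + 1 := by
    intro n
    have hupn := hup n
    have hdownn := hdown n
    set A : Set Ω := {ω' | X (n + 1) ω' = X n ω' + 1 ∧ Y (n + 1) ω' = Y n ω'} with hA
    set B : Set Ω := {ω' | X (n + 1) ω' = X n ω' ∧ Y (n + 1) ω' = Y n ω' + 1} with hB
    have hXn : Measurable (X n) := (hXmeas n).mono (ℱ.le n) le_rfl
    have hYn : Measurable (Y n) := (hYmeas n).mono (ℱ.le n) le_rfl
    have hXn1 : Measurable (X (n+1)) := (hXmeas (n+1)).mono (ℱ.le (n+1)) le_rfl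
    have hYn1 : Measurable (Y (n+1)) := (hYmeas (n+1)).mono (ℱ.le (n+1)) le_rfl
    have hAmeas : MeasurableSet A := by
      rw [hA, Set.setOf_and]
      exact (measurableSet_eq_fun hXn1
        ((measurable_from_top (f := fun k : ℕ => k + 1)).comp hXn)).inter
        (measurableSet_eq_fun hYn1 hYn)
    have hBmeas : MeasurableSet B := by
      rw [hB, Set.setOf_and]
      exact (measurableSet_eq_fun hXn1 hXn).inter
        (measurableSet_eq_fun hYn1
          ((measurable_from_top (f := fun k : ℕ => k + 1)).comp hYn))
    have hIndInt : ∀ S : Set Ω, MeasurableSet S →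
        Integrable (S.indicator fun _ => (1:ℝ)) P :=
      fun S hS => (integrable_const (1:ℝ)).indicator hS
    have hUIint : ∀ S : Set Ω, MeasurableSet S →
        Integrable (fun ω => ((X n ω : ℝ) - Y n ω) * S.indicator (fun _ => (1:ℝ)) ω) P := by
      intro S hS
      refine hInt _ (((x0 + y0 : ℕ) : ℝ) + n)
        ((hUm n).mul (measurable_const.indicator hS)) ?_
      filter_upwards [hUb n] with ω h
      rw [abs_mul]
      have hI : |S.indicator (fun _ => (1:ℝ)) ω| ≤ 1 := by
        by_cases hω : ω ∈ S <;> simp [hω]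
      calc |(X n ω : ℝ) - Y n ω| * |S.indicator (fun _ => (1:ℝ)) ω|
          ≤ (((x0 + y0 : ℕ) : ℝ) + n) * 1 :=
            mul_le_mul h hI (abs_nonneg _) (by positivity)
        _ = ((x0 + y0 : ℕ) : ℝ) + n := mul_one _
    have hUSM : StronglyMeasurable[ℱ n] fun ω => ((X n ω : ℝ) - Y n ω) :=
      ((measurable_from_top.comp (hXmeas n)).sub
        (measurable_from_top.comp (hYmeas n))).stronglyMeasurable
    -- pull-out property
    have pull : ∀ S : Set Ω, MeasurableSet S →
        (∫ ω, ((X n ω : ℝ) - Y n ω) * S.indicator (fun _ => (1:ℝ)) ω ∂P)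
        = ∫ ω, ((X n ω : ℝ) - Y n ω) * (P[S.indicator (fun _ => (1:ℝ)) | ℱ n]) ω ∂P := by
      intro S hS
      have hmul := condExp_mul_of_stronglyMeasurable_left (μ := P) (m := ℱ n) hUSM
        (show Integrable ((fun ω => ((X n ω : ℝ) - Y n ω)) * S.indicator fun _ => (1:ℝ)) P
          from hUIint S hS)
        (hIndInt S hS)
      calc (∫ ω, ((X n ω : ℝ) - Y n ω) * S.indicator (fun _ => (1:ℝ)) ω ∂P)
          = ∫ ω, (P[(fun ω' => ((X n ω' : ℝ) - Y n ω')) *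
              S.indicator (fun _ => (1:ℝ)) | ℱ n]) ω ∂P :=
            (integral_condExp (ℱ.le n)).symm
        _ = ∫ ω, ((X n ω : ℝ) - Y n ω) * (P[S.indicator (fun _ => (1:ℝ)) | ℱ n]) ω ∂P := by
            refine integral_congr_ae ?_
            filter_upwards [hmul] with ω hω
            simpa using hω
    -- pointwise expansion of U_{n+1}²
    have hptwise : ∀ᵐ ω ∂P, ((X (n+1) ω : ℝ) - Y (n+1) ω) ^ 2
        = ((X n ω : ℝ) - Y n ω) ^ 2
          + 2 * (((X n ω : ℝ) - Y n ω) * A.indicator (fun _ => (1:ℝ)) ω)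
          - 2 * (((X n ω : ℝ) - Y n ω) * B.indicator (fun _ => (1:ℝ)) ω) + 1 := by
      filter_upwards [hstep n] with ω hω
      rcases hω with ⟨h, h'⟩ | ⟨h, h'⟩
      · have hmem : ω ∈ A := by rw [hA]; exact ⟨h, h'⟩
        have hnot : ω ∉ B := by
          intro hb
          rw [hB] at hb
          obtain ⟨hb1, hb2⟩ := hb
          omega
        rw [Set.indicator_of_mem hmem, Set.indicator_of_notMem hnot, h, h']
        push_cast
        ring
      · have hmem : ω ∈ B := by rw [hB]; exact ⟨h, h'⟩
        have hnot : ω ∉ A := by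
          intro hb
          rw [hA] at hb
          obtain ⟨hb1, hb2⟩ := hb
          omega
        rw [Set.indicator_of_mem hmem, Set.indicator_of_notMem hnot, h, h']
        push_cast
        ring
    have iU2 := hU2int n
    have iUA := hUIint A hAmeas
    have iUB := hUIint B hBmeas
    have hsplit : (∫ ω, ((X (n+1) ω : ℝ) - Y (n+1) ω) ^ 2 ∂P)
        = (∫ ω, ((X n ω : ℝ) - Y n ω) ^ 2 ∂P)
          + 2 * (∫ ω, ((X n ω : ℝ) - Y n ω) * A.indicator (fun _ => (1:ℝ)) ω ∂P)
          - 2 * (∫ ω, ((X n ω : ℝ) - Y n ω) * B.indicator (fun _ => (1:ℝ)) ω ∂P) + 1 := by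
      have i2 : Integrable (fun ω => 2 * (((X n ω : ℝ) - Y n ω) *
          A.indicator (fun _ => (1:ℝ)) ω)) P := iUA.const_mul 2
      have i3 : Integrable (fun ω => 2 * (((X n ω : ℝ) - Y n ω) *
          B.indicator (fun _ => (1:ℝ)) ω)) P := iUB.const_mul 2
      have i12 : Integrable (fun ω => ((X n ω : ℝ) - Y n ω) ^ 2
          + 2 * (((X n ω : ℝ) - Y n ω) * A.indicator (fun _ => (1:ℝ)) ω)) P := iU2.add i2
      have i123 : Integrable (fun ω => ((X n ω : ℝ) - Y n ω) ^ 2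
          + 2 * (((X n ω : ℝ) - Y n ω) * A.indicator (fun _ => (1:ℝ)) ω)
          - 2 * (((X n ω : ℝ) - Y n ω) * B.indicator (fun _ => (1:ℝ)) ω)) P := i12.sub i3
      rw [integral_congr_ae hptwise,
        integral_add i123 (integrable_const 1),
        integral_sub i12 i3,
        integral_add iU2 i2, integral_const_mul, integral_const_mul,
        integral_const]
      simp
    -- boundedness of the drift fractions
    have hfrac : ∀ (a b : ℝ), 0 ≤ a → 0 ≤ b → a + b = α + β → ∀ᵐ ω ∂P,
        |(a * (X n ω : ℝ) + b * (Y n ω : ℝ)) /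
          ((α + β) * ((X n ω : ℝ) + (Y n ω : ℝ)))| ≤ 1 := by
      intro a b ha hb hab
      filter_upwards [hS n] with ω h
      have hXY : (X n ω : ℝ) + Y n ω = ((x0 + y0 : ℕ) : ℝ) + n := by exact_mod_cast h
      have hx : (0:ℝ) ≤ X n ω := Nat.cast_nonneg _
      have hy : (0:ℝ) ≤ Y n ω := Nat.cast_nonneg _
      have hden : (0:ℝ) < (α + β) * ((X n ω : ℝ) + (Y n ω : ℝ)) := by
        rw [hXY]; exact mul_pos hαβ (by positivity)
      rw [abs_of_nonneg (div_nonneg (by positivity) hden.le), div_le_one hden]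
      nlinarith [mul_nonneg ha hy, mul_nonneg hb hx]
    -- integrability of U * fraction
    have hfAmeas : Measurable (fun ω => (α * (X n ω : ℝ) + β * (Y n ω : ℝ)) /
        ((α + β) * ((X n ω : ℝ) + (Y n ω : ℝ)))) :=
      ((measurable_const.mul (hXm n)).add (measurable_const.mul (hYm n))).div
        (measurable_const.mul ((hXm n).add (hYm n)))
    have hfBmeas : Measurable (fun ω => (α * (Y n ω : ℝ) + β * (X n ω : ℝ)) /
        ((α + β) * ((X n ω : ℝ) + (Y n ω : ℝ)))) :=
      ((measurable_const.mul (hYm n)).add (measurable_const.mul (hXm n))).div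
        (measurable_const.mul ((hXm n).add (hYm n)))
    have hUfAint : Integrable (fun ω => ((X n ω : ℝ) - Y n ω) *
        ((α * (X n ω : ℝ) + β * (Y n ω : ℝ)) /
          ((α + β) * ((X n ω : ℝ) + (Y n ω : ℝ))))) P := by
      refine hInt _ (((x0 + y0 : ℕ) : ℝ) + n) ((hUm n).mul hfAmeas) ?_
      filter_upwards [hUb n, hfrac α β hα hβ rfl] with ω h1 h2
      rw [abs_mul]
      calc |(X n ω : ℝ) - Y n ω| * _ ≤ (((x0 + y0 : ℕ) : ℝ) + n) * 1 :=
            mul_le_mul h1 h2 (abs_nonneg _) (by positivity)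
        _ = ((x0 + y0 : ℕ) : ℝ) + n := mul_one _
    have hUfBint : Integrable (fun ω => ((X n ω : ℝ) - Y n ω) *
        ((α * (Y n ω : ℝ) + β * (X n ω : ℝ)) /
          ((α + β) * ((X n ω : ℝ) + (Y n ω : ℝ))))) P := by
      refine hInt _ (((x0 + y0 : ℕ) : ℝ) + n) ((hUm n).mul hfBmeas) ?_
      filter_upwards [hUb n, hfrac β α hβ hα (add_comm β α)] with ω h1 h2
      rw [abs_mul]
      have h2' : |(α * (Y n ω : ℝ) + β * (X n ω : ℝ)) /
          ((α + β) * ((X n ω : ℝ) + (Y n ω : ℝ)))| ≤ 1 := by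
        rw [show α * (Y n ω : ℝ) + β * (X n ω : ℝ)
            = β * (X n ω : ℝ) + α * (Y n ω : ℝ) by ring]
        exact h2
      calc |(X n ω : ℝ) - Y n ω| * _ ≤ (((x0 + y0 : ℕ) : ℝ) + n) * 1 :=
            mul_le_mul h1 h2' (abs_nonneg _) (by positivity)
        _ = ((x0 + y0 : ℕ) : ℝ) + n := mul_one _
    -- rewrite the two conditional expectations
    have eA : (∫ ω, ((X n ω : ℝ) - Y n ω) * A.indicator (fun _ => (1:ℝ)) ω ∂P)
        = ∫ ω, ((X n ω : ℝ) - Y n ω) *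
            ((α * (X n ω : ℝ) + β * (Y n ω : ℝ)) /
              ((α + β) * ((X n ω : ℝ) + (Y n ω : ℝ)))) ∂P := by
      rw [pull A hAmeas]
      refine integral_congr_ae ?_
      filter_upwards [hupn] with ω hω
      rw [hω]
    have eB : (∫ ω, ((X n ω : ℝ) - Y n ω) * B.indicator (fun _ => (1:ℝ)) ω ∂P)
        = ∫ ω, ((X n ω : ℝ) - Y n ω) *
            ((α * (Y n ω : ℝ) + β * (X n ω : ℝ)) /
              ((α + β) * ((X n ω : ℝ) + (Y n ω : ℝ)))) ∂P := by
      rw [pull B hBmeas]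
      refine integral_congr_ae ?_
      filter_upwards [hdownn] with ω hω
      rw [hω]
    -- the drift difference
    have ediff : (∫ ω, ((X n ω : ℝ) - Y n ω) *
            ((α * (X n ω : ℝ) + β * (Y n ω : ℝ)) /
              ((α + β) * ((X n ω : ℝ) + (Y n ω : ℝ)))) ∂P)
        - (∫ ω, ((X n ω : ℝ) - Y n ω) *
            ((α * (Y n ω : ℝ) + β * (X n ω : ℝ)) /
              ((α + β) * ((X n ω : ℝ) + (Y n ω : ℝ)))) ∂P)
        = (ρ / (((x0 + y0 : ℕ) : ℝ) + n)) * ∫ ω, ((X n ω : ℝ) - Y n ω) ^ 2 ∂P := by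
      rw [← integral_sub hUfAint hUfBint, ← integral_const_mul]
      refine integral_congr_ae ?_
      filter_upwards [hS n] with ω h
      have hXY : (X n ω : ℝ) + Y n ω = ((x0 + y0 : ℕ) : ℝ) + n := by exact_mod_cast h
      have hpos : (0:ℝ) < ((x0 + y0 : ℕ) : ℝ) + n := by positivity
      exact stmt2_drift α β ρ _ _ _ hαβ' (ne_of_gt hpos) hρ hXY
    rw [hsplit, eA, eB]
    exact stmt2_alg _ _ _ _ _ ediff
  obtain ⟨C, hC⟩ := stmt2_aux_growth ρ hρhalf (x0 + y0) hx0y0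
    (fun n => ∫ ω, ((X n ω : ℝ) - Y n ω) ^ 2 ∂P)
    (integral_nonneg fun ω => sq_nonneg _) hrec
  exact ⟨C, hC⟩
end

section
/- Let (𝓖_n)_{n≥0} be a filtration and (Z_n)_{n≥0} an (𝓖_n)-adapted real-valued process with Z_0 integrable, and let B > 0, a > 0 and σ ≥ 0 be constants such that for every n, almost surely |Z_{n+1} − Z_n| ≤ B, Z_n > 0, and a ≤ E[Z_{n+1} − Z_n | 𝓖_n] ≤ a + σ/Z_n. Then Z_n/n → a almost surely as n → ∞. -/
open MeasureTheory Filter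
open Finset

/-- Kronecker's lemma. -/
lemma kronecker_aux {x : ℕ → ℝ} {c : ℝ}
    (h : Tendsto (fun n => ∑ k ∈ Finset.range n, x k / ((k : ℝ) + 1)) atTop (nhds c)) :
    Tendsto (fun n => (∑ k ∈ Finset.range n, x k) / (n : ℝ)) atTop (nhds 0) := by
  set s : ℕ → ℝ := fun n => ∑ k ∈ Finset.range n, x k / ((k : ℝ) + 1) with hs
  have key : ∀ n, ∑ k ∈ Finset.range n, x k
      = (n : ℝ) * s n - ∑ k ∈ Finset.range n, s k := by
    intro n
    induction n with
    | zero => simp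
    | succ n ih =>
      have hsucc : s (n + 1) = s n + x n / ((n : ℝ) + 1) := by
        simp [hs, Finset.sum_range_succ]
      have hne : ((n : ℝ) + 1) ≠ 0 := by positivity
      rw [Finset.sum_range_succ, ih, Finset.sum_range_succ (f := s), hsucc]
      push_cast
      field_simp
      ring
  have h2 : Tendsto (fun n => s n - (n : ℝ)⁻¹ * ∑ k ∈ Finset.range n, s k)
      atTop (nhds (c - c)) := h.sub h.cesaro
  rw [sub_self] at h2
  refine h2.congr' ?_
  filter_upwards [eventually_ge_atTop 1] with n hn
  have hne : (n : ℝ) ≠ 0 := by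
    have : (1 : ℝ) ≤ n := by exact_mod_cast hn
    linarith
  rw [key n]
  field_simp

lemma det_aux {a σ c : ℝ} (ha : 0 < a) (hσ : 0 ≤ σ) (z g : ℕ → ℝ)
    (hpos : ∀ n, 0 < z n) (hglb : ∀ n, a ≤ g n) (hgub : ∀ n, g n ≤ a + σ / z n)
    (hN : Tendsto (fun n => ∑ k ∈ Finset.range n, (z (k + 1) - z k - g k) / ((k : ℝ) + 1))
      atTop (nhds c)) :
    Tendsto (fun n => z n / (n : ℝ)) atTop (nhds a) := by
  have hm0 : Tendsto (fun n => (z n - z 0 - ∑ k ∈ Finset.range n, g k) / (n : ℝ))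
      atTop (nhds 0) := by
    have := kronecker_aux hN
    refine this.congr fun n => ?_
    congr 1
    rw [Finset.sum_sub_distrib, Finset.sum_range_sub (f := z)]
  -- lower bound sequence
  have hlb : Tendsto (fun n => (z n - z 0 - ∑ k ∈ Finset.range n, g k) / (n : ℝ)
      + z 0 / (n : ℝ) + a) atTop (nhds a) := by
    have := (hm0.add (tendsto_const_div_atTop_nhds_zero_nat (z 0))).add
      (tendsto_const_nhds : Tendsto (fun _ : ℕ => a) atTop (nhds a))
    simpa using this
  have hlow : ∀ᶠ n in atTop, (z n - z 0 - ∑ k ∈ Finset.range n, g k) / (n : ℝ)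
      + z 0 / (n : ℝ) + a ≤ z n / (n : ℝ) := by
    filter_upwards [eventually_ge_atTop 1] with n hn
    have hnpos : (0 : ℝ) < n := by exact_mod_cast hn
    have hsum : (n : ℝ) * a ≤ ∑ k ∈ Finset.range n, g k := by
      have := Finset.card_nsmul_le_sum (Finset.range n) g a fun k _ => hglb k
      simpa [nsmul_eq_mul, mul_comm] using this
    have : (z n - z 0 - ∑ k ∈ Finset.range n, g k) / (n : ℝ)
        + z 0 / (n : ℝ) + a
        ≤ (z n - z 0 - ∑ k ∈ Finset.range n, g k) / (n : ℝ)
        + z 0 / (n : ℝ) + (∑ k ∈ Finset.range n, g k) / (n : ℝ) := by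
      have : a ≤ (∑ k ∈ Finset.range n, g k) / (n : ℝ) := by
        rw [le_div_iff₀ hnpos]; linarith [hsum]
      linarith
    refine this.trans_eq ?_
    field_simp
    ring
  -- z tends to infinity
  have hztop : Tendsto z atTop atTop := by
    have hev : ∀ᶠ (n : ℕ) in atTop, (a / 2) * (n : ℝ) ≤ z n := by
      filter_upwards [hlow, hlb.eventually (eventually_ge_nhds (by linarith : a / 2 < a)),
        eventually_ge_atTop 1] with n h1 h2 hn
      have hnpos : (0 : ℝ) < n := by exact_mod_cast hn
      have : a / 2 ≤ z n / (n : ℝ) := le_trans h2 h1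
      have h4 := mul_le_mul_of_nonneg_right this hnpos.le
      rwa [div_mul_cancel₀ _ hnpos.ne'] at h4
    refine tendsto_atTop_mono' atTop hev ?_
    exact (tendsto_natCast_atTop_atTop (R := ℝ)).const_mul_atTop (by linarith)
  have hinv : Tendsto (fun n => σ / z n) atTop (nhds 0) := by
    have := (tendsto_inv_atTop_zero.comp hztop).const_mul σ
    simpa [div_eq_mul_inv, Function.comp] using this
  have hces := hinv.cesaro
  have hub : Tendsto (fun n => (z n - z 0 - ∑ k ∈ Finset.range n, g k) / (n : ℝ)
      + z 0 / (n : ℝ) + a + (n : ℝ)⁻¹ * ∑ k ∈ Finset.range n, σ / z k) atTop (nhds a) := by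
    have := hlb.add hces
    simpa using this
  have hupper : ∀ᶠ n in atTop, z n / (n : ℝ)
      ≤ (z n - z 0 - ∑ k ∈ Finset.range n, g k) / (n : ℝ)
      + z 0 / (n : ℝ) + a + (n : ℝ)⁻¹ * ∑ k ∈ Finset.range n, σ / z k := by
    filter_upwards [eventually_ge_atTop 1] with n hn
    have hnpos : (0 : ℝ) < n := by exact_mod_cast hn
    have hsum : ∑ k ∈ Finset.range n, g k
        ≤ (n : ℝ) * a + ∑ k ∈ Finset.range n, σ / z k := by
      calc ∑ k ∈ Finset.range n, g k ≤ ∑ k ∈ Finset.range n, (a + σ / z k) :=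
            Finset.sum_le_sum fun k _ => hgub k
        _ = (n : ℝ) * a + ∑ k ∈ Finset.range n, σ / z k := by
            rw [Finset.sum_add_distrib]; simp [mul_comm]
    have heq : z n / (n : ℝ) = (z n - z 0 - ∑ k ∈ Finset.range n, g k) / (n : ℝ)
        + z 0 / (n : ℝ) + (∑ k ∈ Finset.range n, g k) / (n : ℝ) := by
      field_simp
      ring
    rw [heq]
    have : (∑ k ∈ Finset.range n, g k) / (n : ℝ)
        ≤ a + (n : ℝ)⁻¹ * ∑ k ∈ Finset.range n, σ / z k := by
      rw [div_le_iff₀ hnpos]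
      have : (a + (n : ℝ)⁻¹ * ∑ k ∈ Finset.range n, σ / z k) * n
          = (n : ℝ) * a + ∑ k ∈ Finset.range n, σ / z k := by
        field_simp
      rw [this]; exact hsum
    linarith
  exact tendsto_of_tendsto_of_tendsto_of_le_of_le' hlb hub hlow hupper

lemma sum_inv_sq_le (n : ℕ) : ∑ k ∈ Finset.range n, (1 / ((k : ℝ) + 1)) ^ 2 ≤ 2 := by
  have key : ∀ m : ℕ, ∑ k ∈ Finset.range m, (1 / ((k : ℝ) + 1)) ^ 2 ≤ 2 - 2 / ((m : ℝ) + 1) := by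
    intro m
    induction m with
    | zero => norm_num
    | succ m ih =>
      rw [Finset.sum_range_succ]
      have h1 : (1 / ((m : ℝ) + 1)) ^ 2 ≤ 2 / ((m : ℝ) + 1) - 2 / ((m : ℝ) + 2) := by
        have hm1 : (0 : ℝ) < (m : ℝ) + 1 := by positivity
        have hm2 : (0 : ℝ) < (m : ℝ) + 2 := by positivity
        rw [div_sub_div _ _ hm1.ne' hm2.ne']
        rw [div_pow, one_pow]
        rw [div_le_div_iff₀ (by positivity) (by positivity)]
        ring_nf
        nlinarith [sq_nonneg ((m : ℝ) + 1)]
      push_cast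
      push_cast at ih h1
      rw [show ((m : ℝ) + 1 + 1) = (m : ℝ) + 2 from by ring]
      linarith
  have h0 : (0 : ℝ) ≤ 2 / ((n : ℝ) + 1) := by positivity
  linarith [key n]

/-- Lemma on the strong law for processes with almost constant drift.
If `(Zₙ)` is adapted to `(𝒢ₙ)`, has bounded increments `|Z_{n+1} − Zₙ| ≤ B`, is positive,
`Z₀` is integrable, and the conditional drift satisfies
`a ≤ E[Z_{n+1} − Zₙ | 𝒢ₙ] ≤ a + σ/Zₙ` a.s. with `B > 0`, `a > 0`, `σ ≥ 0`,
then `Zₙ/n → a` almost surely. -/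
theorem stmt_5
    {Ω : Type*} {m0 : MeasurableSpace Ω} (P : Measure Ω) [IsProbabilityMeasure P]
    (𝒢 : Filtration ℕ m0)
    (Z : ℕ → Ω → ℝ) (hZadapted : ∀ n, Measurable[𝒢 n] (Z n))
    (hZ0int : Integrable (Z 0) P)
    (B a σ : ℝ) (hB : 0 < B) (ha : 0 < a) (hσ : 0 ≤ σ)
    (hbdd : ∀ n, ∀ᵐ ω ∂P, |Z (n + 1) ω - Z n ω| ≤ B)
    (hpos : ∀ n, ∀ᵐ ω ∂P, 0 < Z n ω)
    (hdrift : ∀ n, ∀ᵐ ω ∂P,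
      a ≤ (P[(fun ω' => Z (n + 1) ω' - Z n ω') | 𝒢 n]) ω ∧
      (P[(fun ω' => Z (n + 1) ω' - Z n ω') | 𝒢 n]) ω ≤ a + σ / Z n ω) :
    ∀ᵐ ω ∂P, Tendsto (fun n : ℕ => Z n ω / (n : ℝ)) atTop (nhds a) := by
  classical
  have hZm : ∀ n, Measurable (Z n) := fun n => (hZadapted n).mono (𝒢.le n) le_rfl
  have hadapted : StronglyAdapted 𝒢 Z := fun n => (hZadapted n).stronglyMeasurable
  set g : ℕ → Ω → ℝ := fun n => P[Z (n + 1) - Z n|𝒢 n] with hg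
  have hDint : ∀ n, Integrable (Z (n + 1) - Z n) P := by
    intro n
    refine MemLp.integrable le_top (memLp_top_of_bound
      (((hZm (n + 1)).sub (hZm n)).aestronglyMeasurable) B ?_)
    filter_upwards [hbdd n] with ω hω
    simpa [Real.norm_eq_abs] using hω
  have hZint : ∀ n, Integrable (Z n) P := by
    intro n
    induction n with
    | zero => exact hZ0int
    | succ n ih =>
      have h2 := ih.add (hDint n)
      have he : Z n + (Z (n + 1) - Z n) = Z (n + 1) := by
        funext ω; simp
      rwa [he] at h2
  set M : ℕ → Ω → ℝ := martingalePart Z 𝒢 P with hMdef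
  have hM : Martingale M 𝒢 P := martingale_martingalePart hadapted hZint
  have hMadp : StronglyAdapted 𝒢 M := hM.stronglyAdapted
  have hMint : ∀ n, Integrable (M n) P := fun n => hM.integrable n
  have hMm : ∀ n, Measurable (M n) := fun n =>
    ((hMadp n).measurable).mono (𝒢.le n) le_rfl
  have hMeq : ∀ n ω, M n ω
      = Z 0 ω + ∑ k ∈ Finset.range n, (Z (k + 1) ω - Z k ω - g k ω) := by
    intro n ω
    rw [hMdef, martingalePart_eq_sum]
    simp [hg, Finset.sum_apply]
  -- bounded increments of M
  have hMbdd : ∀ᵐ ω ∂P, ∀ i, |M (i + 1) ω - M i ω| ≤ 2 * B := by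
    have hbdd' : ∀ᵐ ω ∂P, ∀ i, |Z (i + 1) ω - Z i ω| ≤ ((⟨B, hB.le⟩ : NNReal) : ℝ) :=
      ae_all_iff.2 fun i => by simpa using hbdd i
    have h2 := martingalePart_bdd_difference (μ := P) (f := Z) (R := ((⟨B, hB.le⟩ : NNReal) : ℝ)) 𝒢
      (by simpa [Real.norm_eq_abs] using hbdd')
    filter_upwards [h2] with ω hω i
    have h3 := hω i
    rw [hMdef]
    simpa [two_mul] using h3
  -- the weighted martingale
  set N : ℕ → Ω → ℝ :=
    fun n ω => ∑ k ∈ Finset.range n, (M (k + 1) ω - M k ω) / ((k : ℝ) + 1) with hNdef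
  have hNadp : StronglyAdapted 𝒢 N := by
    intro n
    have hterm : ∀ k ∈ Finset.range n,
        StronglyMeasurable[𝒢 n] (fun ω => (M (k + 1) ω - M k ω) / ((k : ℝ) + 1)) := by
      intro k hk
      have hk' : k + 1 ≤ n := Finset.mem_range.mp hk
      have hsub : StronglyMeasurable[𝒢 n] (fun ω => (M (k + 1) ω - M k ω) * (((k : ℝ) + 1))⁻¹) :=
        (((hMadp (k + 1)).mono (𝒢.mono hk')).sub
          ((hMadp k).mono (𝒢.mono (by omega)))).mul_const _
      simpa [div_eq_mul_inv] using hsub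
    exact Finset.stronglyMeasurable_fun_sum _ hterm
  have hNm : ∀ n, Measurable (N n) := fun n =>
    ((hNadp n).measurable).mono (𝒢.le n) le_rfl
  have hNint : ∀ n, Integrable (N n) P := by
    intro n
    apply integrable_finset_sum
    intro k _
    exact ((hMint (k + 1)).sub (hMint k)).div_const _
  have hstep : ∀ n, P[M (n + 1) - M n|𝒢 n] =ᵐ[P] 0 := by
    intro n
    have h1 := condExp_sub (m := 𝒢 n) (μ := P) (hMint (n + 1)) (hMint n)
    have h2 := hM.condExp_ae_eq (Nat.le_succ n)
    have h3 : P[M n|𝒢 n] = M n :=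
      condExp_of_stronglyMeasurable (𝒢.le n) (hMadp n) (hMint n)
    filter_upwards [h1, h2] with ω hω1 hω2
    simp only [Pi.sub_apply, Pi.zero_apply] at *
    rw [hω1, hω2, h3]
    simp
  -- the increment of N
  set D : ℕ → Ω → ℝ := fun n ω => (M (n + 1) ω - M n ω) / ((n : ℝ) + 1) with hDdef
  have hDsmul : ∀ n, D n = ((n : ℝ) + 1)⁻¹ • (M (n + 1) - M n) := by
    intro n; funext ω
    simp [hDdef, div_eq_inv_mul]
  have hDm : ∀ n, Measurable (D n) := fun n =>
    ((hMm (n + 1)).sub (hMm n)).div_const _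
  have hDi : ∀ n, Integrable (D n) P := fun n =>
    ((hMint (n + 1)).sub (hMint n)).div_const _
  have hDbd : ∀ᵐ ω ∂P, ∀ n, |D n ω| ≤ 2 * B / ((n : ℝ) + 1) := by
    filter_upwards [hMbdd] with ω hω n
    rw [hDdef]
    have h0 : (0 : ℝ) < (n : ℝ) + 1 := by positivity
    rw [abs_div, abs_of_pos h0]
    gcongr
    exact hω n
  have hDzero : ∀ n, P[D n|𝒢 n] =ᵐ[P] 0 := by
    intro n
    rw [hDsmul n]
    have h3 := condExp_smul (μ := P) (m := 𝒢 n) (((n : ℝ) + 1)⁻¹) (M (n + 1) - M n)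
    filter_upwards [h3, hstep n] with ω hω3 hω0
    simp only [Pi.smul_apply, smul_eq_mul, Pi.zero_apply] at *
    rw [hω3, hω0, mul_zero]
  have hNsucc : ∀ n ω, N (n + 1) ω = N n ω + D n ω := by
    intro n ω
    simp [hNdef, hDdef, Finset.sum_range_succ]
  have hNmart : Martingale N 𝒢 P := by
    refine martingale_nat hNadp hNint fun n => ?_
    have hNfun : N (n + 1) = N n + D n := funext fun ω => hNsucc n ω
    have h1 : P[N (n + 1)|𝒢 n] =ᵐ[P] P[N n|𝒢 n] + P[D n|𝒢 n] := by
      rw [hNfun]; exact condExp_add (hNint n) (hDi n) _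
    have h2 : P[N n|𝒢 n] = N n :=
      condExp_of_stronglyMeasurable (𝒢.le n) (hNadp n) (hNint n)
    filter_upwards [h1, hDzero n] with ω hω1 hω0
    rw [hω1]
    simp only [Pi.add_apply, h2, hω0, Pi.zero_apply, add_zero]
  -- a.e. bound on N n
  have hNbdd : ∀ᵐ ω ∂P, ∀ n,
      |N n ω| ≤ ∑ k ∈ Finset.range n, 2 * B / ((k : ℝ) + 1) := by
    filter_upwards [hDbd] with ω hω n
    have : N n ω = ∑ k ∈ Finset.range n, D k ω := by
      simp [hNdef, hDdef]
    rw [this]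
    calc |∑ k ∈ Finset.range n, D k ω| ≤ ∑ k ∈ Finset.range n, |D k ω| :=
          Finset.abs_sum_le_sum_abs _ _
      _ ≤ ∑ k ∈ Finset.range n, 2 * B / ((k : ℝ) + 1) :=
          Finset.sum_le_sum fun k _ => hω k
  have hcNpos : ∀ n, (0 : ℝ) ≤ ∑ k ∈ Finset.range n, 2 * B / ((k : ℝ) + 1) := by
    intro n
    apply Finset.sum_nonneg
    intro k _
    positivity
  -- integrability of squares and products
  have hN2int : ∀ n, Integrable (fun ω => N n ω ^ 2) P := by
    intro n
    refine MemLp.integrable le_top (memLp_top_of_bound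
      (((hNm n).pow_const 2).aestronglyMeasurable)
      ((∑ k ∈ Finset.range n, 2 * B / ((k : ℝ) + 1)) ^ 2) ?_)
    filter_upwards [hNbdd] with ω hω
    rw [Real.norm_eq_abs, abs_pow]
    exact pow_le_pow_left₀ (abs_nonneg _) (hω n) 2
  have hD2int : ∀ n, Integrable (fun ω => D n ω ^ 2) P := by
    intro n
    refine MemLp.integrable le_top (memLp_top_of_bound
      (((hDm n).pow_const 2).aestronglyMeasurable) ((2 * B / ((n : ℝ) + 1)) ^ 2) ?_)
    filter_upwards [hDbd] with ω hω
    rw [Real.norm_eq_abs, abs_pow]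
    exact pow_le_pow_left₀ (abs_nonneg _) (hω n) 2
  have hNDint : ∀ n, Integrable (fun ω => N n ω * D n ω) P := by
    intro n
    refine MemLp.integrable le_top (memLp_top_of_bound
      (((hNm n).mul (hDm n)).aestronglyMeasurable)
      ((∑ k ∈ Finset.range n, 2 * B / ((k : ℝ) + 1)) * (2 * B / ((n : ℝ) + 1))) ?_)
    filter_upwards [hNbdd, hDbd] with ω hω1 hω2
    rw [Real.norm_eq_abs, abs_mul]
    exact mul_le_mul (hω1 n) (hω2 n) (abs_nonneg _) (hcNpos n)
  -- orthogonality
  have hcross : ∀ n, ∫ ω, N n ω * D n ω ∂P = 0 := by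
    intro n
    have hpull : P[N n * D n|𝒢 n] =ᵐ[P] N n * P[D n|𝒢 n] :=
      condExp_stronglyMeasurable_mul_of_bound (𝒢.le n) (hNadp n) (hDi n)
        (∑ k ∈ Finset.range n, 2 * B / ((k : ℝ) + 1))
        (by filter_upwards [hNbdd] with ω hω; rw [Real.norm_eq_abs]; exact hω n)
    have hzero : P[N n * D n|𝒢 n] =ᵐ[P] 0 := by
      filter_upwards [hpull, hDzero n] with ω hω1 hω0
      simp only [Pi.mul_apply, Pi.zero_apply] at *
      rw [hω1, hω0, mul_zero]
    have h0 := integral_condExp (μ := P) (f := N n * D n) (𝒢.le n)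
    calc ∫ ω, N n ω * D n ω ∂P = ∫ ω, (P[N n * D n|𝒢 n]) ω ∂P := h0.symm
      _ = ∫ _ω, (0 : ℝ) ∂P := integral_congr_ae hzero
      _ = 0 := integral_zero _ _
  -- the variance bound
  have hvar : ∀ n, ∫ ω, (N n ω) ^ 2 ∂P
      ≤ (2 * B) ^ 2 * ∑ k ∈ Finset.range n, (1 / ((k : ℝ) + 1)) ^ 2 := by
    intro n
    induction n with
    | zero => simp [hNdef]
    | succ n ih =>
      have hexp : ∫ ω, (N (n + 1) ω) ^ 2 ∂P
          = (∫ ω, (N n ω) ^ 2 ∂P + 2 * ∫ ω, N n ω * D n ω ∂P) + ∫ ω, D n ω ^ 2 ∂P := by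
        have hptw : (fun ω => (N (n + 1) ω) ^ 2)
            = fun ω => (N n ω ^ 2 + 2 * (N n ω * D n ω)) + D n ω ^ 2 := by
          funext ω
          rw [hNsucc n ω]; ring
        rw [hptw, integral_add (f := fun ω => N n ω ^ 2 + 2 * (N n ω * D n ω))
            (g := fun ω => D n ω ^ 2) ((hN2int n).add ((hNDint n).const_mul 2)) (hD2int n),
          integral_add (f := fun ω => N n ω ^ 2) (g := fun ω => 2 * (N n ω * D n ω))
            (hN2int n) ((hNDint n).const_mul 2), integral_const_mul]
      have hdsq : ∫ ω, D n ω ^ 2 ∂P ≤ (2 * B) ^ 2 * (1 / ((n : ℝ) + 1)) ^ 2 := by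
        have hb : ∀ᵐ ω ∂P, D n ω ^ 2 ≤ (2 * B / ((n : ℝ) + 1)) ^ 2 := by
          filter_upwards [hDbd] with ω hω
          rw [← sq_abs]
          exact pow_le_pow_left₀ (abs_nonneg _) (hω n) 2
        calc ∫ ω, D n ω ^ 2 ∂P ≤ ∫ _ω, (2 * B / ((n : ℝ) + 1)) ^ 2 ∂P :=
              integral_mono_ae (hD2int n) (integrable_const _) hb
          _ = (2 * B / ((n : ℝ) + 1)) ^ 2 := by simp
          _ = (2 * B) ^ 2 * (1 / ((n : ℝ) + 1)) ^ 2 := by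
              field_simp
      rw [hexp, hcross n, Finset.sum_range_succ, mul_add]
      push_cast
      linarith
  have hvar2 : ∀ n, ∫ ω, (N n ω) ^ 2 ∂P ≤ (2 * B) ^ 2 * 2 := by
    intro n
    refine (hvar n).trans ?_
    have := sum_inv_sq_le n
    have h4 : (0 : ℝ) ≤ (2 * B) ^ 2 := by positivity
    nlinarith
  -- L¹ bound
  have hsnorm : ∀ n, eLpNorm (N n) 1 P ≤ (1 + (2 * B) ^ 2 * 2).toNNReal := by
    intro n
    have hptw : ∀ ω, |N n ω| ≤ 1 + N n ω ^ 2 := by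
      intro ω
      nlinarith [sq_abs (N n ω), sq_nonneg (|N n ω| - 1), abs_nonneg (N n ω)]
    have habs : ∫ ω, |N n ω| ∂P ≤ 1 + (2 * B) ^ 2 * 2 := by
      calc ∫ ω, |N n ω| ∂P ≤ ∫ ω, (1 + N n ω ^ 2) ∂P :=
            integral_mono_ae (hNint n).abs ((integrable_const 1).add (hN2int n))
              (Eventually.of_forall hptw)
        _ = 1 + ∫ ω, N n ω ^ 2 ∂P := by
            rw [integral_add (integrable_const 1) (hN2int n)]; simp
        _ ≤ 1 + (2 * B) ^ 2 * 2 := by linarith [hvar2 n]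
    have heq : eLpNorm (N n) 1 P = ENNReal.ofReal (∫ ω, |N n ω| ∂P) := by
      rw [eLpNorm_one_eq_lintegral_enorm,
        ← ofReal_integral_norm_eq_lintegral_enorm (hNint n)]
      simp [Real.norm_eq_abs]
    rw [heq, ENNReal.ofReal]
    exact ENNReal.coe_le_coe.2 (Real.toNNReal_le_toNNReal habs)
  have hconv := hNmart.submartingale.exists_ae_tendsto_of_bdd hsnorm
  -- conclusion
  have hdriftg : ∀ n, ∀ᵐ ω ∂P, a ≤ g n ω ∧ g n ω ≤ a + σ / Z n ω := hdrift
  filter_upwards [hconv, ae_all_iff.2 hpos, ae_all_iff.2 hdriftg] with ω hcω hposω hdriftω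
  obtain ⟨c, hc⟩ := hcω
  refine det_aux (c := c) ha hσ (fun n => Z n ω) (fun n => g n ω) (fun n => hposω n)
    (fun n => (hdriftω n).1) (fun n => (hdriftω n).2) ?_
  refine hc.congr fun n => ?_
  rw [hNdef]
  apply Finset.sum_congr rfl
  intro k _
  congr 1
  rw [hMeq (k + 1), hMeq k, Finset.sum_range_succ]
  ring
end
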